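/- arXiv:2203.04532 — 6 statements merged into one kernel-verified Lean document; each statement's English description precedes it below -/
import Mathlib

section
/- If u_h : [0, ∞) → ℝ^{M²} is a differentiable function with values in grid functions satisfying du_h/dt = ε² Δ_h u_h + f(u_h) (with f applied entrywise) for all t > 0, then the function t ↦ E_h(u_h(t)) is non-increasing on [0, ∞). -/
open scoped BigOperators
noncomputable section

/-- Grid functions on the `M × M` periodic mesh, identified with vectors in `ℝ^{M²}`.
The sup norm of this Pi type is the discrete `L^∞` (maximum) norm. -/
abbrev GridFun (M : ℕ) : Type := Fin M × Fin M → ℝ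

/-- Discrete inner product `⟨v,w⟩ = h² Σ_{i,j} v_{ij} w_{ij}`. -/
def gridInner (M : ℕ) (h : ℝ) (v w : GridFun M) : ℝ :=
  h ^ 2 * ∑ p : Fin M × Fin M, v p * w p

/-- Discrete `L²` norm `‖v‖ = ⟨v,v⟩^{1/2}`. -/
def gridNorm (M : ℕ) (h : ℝ) (v : GridFun M) : ℝ :=
  Real.sqrt (gridInner M h v v)

/-- The discrete Laplacian as a linear map (periodic indexing via `Fin M` arithmetic). -/
def dLapL (M : ℕ) [NeZero M] (h : ℝ) : GridFun M →ₗ[ℝ] GridFun M where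
  toFun v := fun p =>
    (v (p.1 + 1, p.2) + v (p.1 - 1, p.2) + v (p.1, p.2 + 1) + v (p.1, p.2 - 1) - 4 * v p) / h ^ 2
  map_add' v w := by funext p; simp only [Pi.add_apply]; ring
  map_smul' c v := by funext p; simp only [Pi.smul_apply, smul_eq_mul, RingHom.id_apply]; ring

/-- The discrete Laplacian `Δ_h` as a continuous linear map on `ℝ^{M²}`. -/
def dLap (M : ℕ) [NeZero M] (h : ℝ) : GridFun M →L[ℝ] GridFun M :=
  LinearMap.toContinuousLinearMap (dLapL M h)

/-- Bulk energy `E_{1h}(v) = h² Σ F(v_{ij})`. -/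
def E1h (M : ℕ) (h : ℝ) (F : ℝ → ℝ) (v : GridFun M) : ℝ :=
  h ^ 2 * ∑ p : Fin M × Fin M, F (v p)

/-- Discrete gradient energy `(ε²/2) ‖∇_h v‖²`. -/
def gradE (M : ℕ) [NeZero M] (h ε : ℝ) (v : GridFun M) : ℝ :=
  ε ^ 2 / 2 * (h ^ 2 * ∑ p : Fin M × Fin M,
    (((v (p.1 + 1, p.2) - v p) / h) ^ 2 + ((v (p.1, p.2 + 1) - v p) / h) ^ 2))

/-- Modified energy `𝓔_h(v, r) = (ε²/2)‖∇_h v‖² + r`. -/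
def modE (M : ℕ) [NeZero M] (h ε : ℝ) (v : GridFun M) (r : ℝ) : ℝ :=
  gradE M h ε v + r

/-- Discrete energy `E_h(v) = (ε²/2)‖∇_h v‖² + E_{1h}(v)`. -/
def Eh (M : ℕ) [NeZero M] (h ε : ℝ) (F : ℝ → ℝ) (v : GridFun M) : ℝ :=
  gradE M h ε v + E1h M h F v

/-- `g(v, r) = σ(r) / σ(E_{1h}(v))`. -/
def gFun (M : ℕ) (h : ℝ) (F σ : ℝ → ℝ) (v : GridFun M) (r : ℝ) : ℝ :=
  σ r / σ (E1h M h F v)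

/-- The linear operator `L_κ = κ g₀ I − ε² Δ_h`. -/
def Lkappa (M : ℕ) [NeZero M] (h ε κ g0 : ℝ) : GridFun M →L[ℝ] GridFun M :=
  (κ * g0) • (1 : GridFun M →L[ℝ] GridFun M) - ε ^ 2 • dLap M h

/-- The nonlinear operator `N_κ(v, r) = g(v,r) f(v) + κ g₀ v` (with `f` applied entrywise). -/
def Nkappa (M : ℕ) (h κ g0 : ℝ) (f F σ : ℝ → ℝ) (v : GridFun M) (r : ℝ) : GridFun M :=
  fun p => gFun M h F σ v r * f (v p) + κ * g0 * v p

/-- One step of the GSAV-EI1 scheme. -/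
def EI1step (M : ℕ) [NeZero M] (h ε κ τ : ℝ) (f F σ : ℝ → ℝ) (us : GridFun M × ℝ) :
    GridFun M × ℝ :=
  let g0 := gFun M h F σ us.1 us.2
  let Lk := Lkappa M h ε κ g0
  let u1 := (NormedSpace.exp (-(τ • Lk))) us.1
    + (∫ θ in (0:ℝ)..τ, NormedSpace.exp (-((τ - θ) • Lk))) (Nkappa M h κ g0 f F σ us.1 us.2)
  (u1, us.2 - g0 * gridInner M h (fun p => f (us.1 p)) (u1 - us.1))

/-- The GSAV-EI1 iterates `(uⁿ, sⁿ)`. -/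
def EI1 (M : ℕ) [NeZero M] (h ε κ τ : ℝ) (f F σ : ℝ → ℝ) (uinit : GridFun M) :
    ℕ → GridFun M × ℝ
  | 0 => (uinit, E1h M h F uinit)
  | n + 1 => EI1step M h ε κ τ f F σ (EI1 M h ε κ τ f F σ uinit n)

/-- The midpoint values `(ũ^{n+1/2}, s̃^{n+1/2})` of the GSAV-EI2 scheme, as a function of
`(uⁿ, sⁿ)`; the prediction `(ũ^{n+1}, s̃^{n+1})` is a GSAV-EI1 step. -/
def EI2half (M : ℕ) [NeZero M] (h ε κ τ : ℝ) (f F σ : ℝ → ℝ) (us : GridFun M × ℝ) :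
    GridFun M × ℝ :=
  let t := EI1step M h ε κ τ f F σ us
  ((1 / 2 : ℝ) • (us.1 + t.1), (us.2 + t.2) / 2)

/-- One step of the GSAV-EI2 scheme. -/
def EI2step (M : ℕ) [NeZero M] (h ε κ τ : ℝ) (f F σ : ℝ → ℝ) (us : GridFun M × ℝ) :
    GridFun M × ℝ :=
  let t := EI1step M h ε κ τ f F σ us
  let m := EI2half M h ε κ τ f F σ us
  let gh := gFun M h F σ m.1 m.2
  let Lk := Lkappa M h ε κ gh
  let u1 := (NormedSpace.exp (-(τ • Lk))) us.1
    + (∫ θ in (0:ℝ)..τ, NormedSpace.exp (-((τ - θ) • Lk))) (Nkappa M h κ gh f F σ m.1 m.2)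
  (u1, us.2 - gh * gridInner M h (fun p => f (m.1 p)) (u1 - us.1)
        + κ / 2 * gh * gridInner M h (u1 - t.1) (u1 - us.1))

/-- The GSAV-EI2 iterates `(uⁿ, sⁿ)`. -/
def EI2 (M : ℕ) [NeZero M] (h ε κ τ : ℝ) (f F σ : ℝ → ℝ) (uinit : GridFun M) :
    ℕ → GridFun M × ℝ
  | 0 => (uinit, E1h M h F uinit)
  | n + 1 => EI2step M h ε κ τ f F σ (EI2 M h ε κ τ f F σ uinit n)

/-- One step of the stabilized generalized-SAV scheme (GSAV-EI1 with `e^{−τL}` replaced by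
`(I + τL)^{−1}`). -/
def SAV1step (M : ℕ) [NeZero M] (h ε κ τ : ℝ) (f F σ : ℝ → ℝ) (us : GridFun M × ℝ) :
    GridFun M × ℝ :=
  let g0 := gFun M h F σ us.1 us.2
  let Lk := Lkappa M h ε κ g0
  let u1 := (Ring.inverse ((1 : GridFun M →L[ℝ] GridFun M) + τ • Lk))
      (us.1 + τ • Nkappa M h κ g0 f F σ us.1 us.2)
  (u1, us.2 - g0 * gridInner M h (fun p => f (us.1 p)) (u1 - us.1))

/-- The stabilized generalized-SAV iterates `(uⁿ, sⁿ)`. -/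
def SAV1 (M : ℕ) [NeZero M] (h ε κ τ : ℝ) (f F σ : ℝ → ℝ) (uinit : GridFun M) :
    ℕ → GridFun M × ℝ
  | 0 => (uinit, E1h M h F uinit)
  | n + 1 => SAV1step M h ε κ τ f F σ (SAV1 M h ε κ τ f F σ uinit n)

lemma shiftA {M : ℕ} [NeZero M] (g : Fin M × Fin M → ℝ) :
    ∑ p : Fin M × Fin M, g (p.1 + 1, p.2) = ∑ p : Fin M × Fin M, g p :=
  Fintype.sum_equiv ((Equiv.addRight (1 : Fin M)).prodCongr (Equiv.refl _)) _ _ (fun _ => rfl)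

lemma shiftB {M : ℕ} [NeZero M] (g : Fin M × Fin M → ℝ) :
    ∑ p : Fin M × Fin M, g (p.1, p.2 + 1) = ∑ p : Fin M × Fin M, g p :=
  Fintype.sum_equiv ((Equiv.refl (Fin M)).prodCongr (Equiv.addRight (1 : Fin M))) _ _
    (fun _ => rfl)

/-- Summation by parts on the periodic grid. -/
lemma sbp {M : ℕ} [NeZero M] (v w : GridFun M) :
    ∑ p : Fin M × Fin M,
      ((v (p.1 + 1, p.2) - v p) * (w (p.1 + 1, p.2) - w p)
        + (v (p.1, p.2 + 1) - v p) * (w (p.1, p.2 + 1) - w p))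
    = ∑ p : Fin M × Fin M,
      (4 * v p - v (p.1 + 1, p.2) - v (p.1 - 1, p.2) - v (p.1, p.2 + 1) - v (p.1, p.2 - 1))
        * w p := by
  rw [← sub_eq_zero, ← Finset.sum_sub_distrib]
  have e1 := shiftA (M := M) (fun p => v p * w p)
  have e2 := shiftB (M := M) (fun p => v p * w p)
  have e3 := shiftA (M := M) (fun p => v (p.1 - 1, p.2) * w p)
  have e4 := shiftB (M := M) (fun p => v (p.1, p.2 - 1) * w p)
  simp only [add_sub_cancel_right] at e3 e4
  have hdecomp : ∀ p : Fin M × Fin M,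
      ((v (p.1 + 1, p.2) - v p) * (w (p.1 + 1, p.2) - w p)
        + (v (p.1, p.2 + 1) - v p) * (w (p.1, p.2 + 1) - w p))
      - (4 * v p - v (p.1 + 1, p.2) - v (p.1 - 1, p.2) - v (p.1, p.2 + 1) - v (p.1, p.2 - 1))
        * w p
      = (v (p.1 + 1, p.2) * w (p.1 + 1, p.2) - v p * w p)
        + (v (p.1, p.2 + 1) * w (p.1, p.2 + 1) - v p * w p)
        + (v (p.1 - 1, p.2) * w p - v p * w (p.1 + 1, p.2))
        + (v (p.1, p.2 - 1) * w p - v p * w (p.1, p.2 + 1)) := fun p => by ring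
  rw [Finset.sum_congr rfl (fun p _ => hdecomp p)]
  simp only [Finset.sum_add_distrib, Finset.sum_sub_distrib]
  rw [e1, e2, ← e3, ← e4]
  ring

/-- Energy dissipation of the space-discrete Allen–Cahn equation:
if `u : [0,∞) → ℝ^{M²}` is differentiable and satisfies `du/dt = ε² Δ_h u + f(u)` for `t > 0`,
then `t ↦ E_h(u(t))` is non-increasing on `[0, ∞)`. -/
theorem stmt_2 (M : ℕ) [NeZero M] (L h ε : ℝ) (hL : 0 < L) (hh : h = L / M) (hε : 0 < ε)
    (f F : ℝ → ℝ) (hf : ContDiff ℝ 1 f) (hF : ∀ x, HasDerivAt F (-f x) x)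
    (u : ℝ → GridFun M)
    (hu : DifferentiableOn ℝ u (Set.Ici 0))
    (hode : ∀ t : ℝ, 0 < t →
      HasDerivAt u (ε ^ 2 • dLap M h (u t) + fun p => f (u t p)) t) :
    AntitoneOn (fun t => Eh M h ε F (u t)) (Set.Ici 0) := by
  have hM : (0 : ℝ) < M := by
    exact_mod_cast Nat.pos_of_ne_zero (NeZero.ne M)
  have hh0 : (0 : ℝ) < h := by rw [hh]; positivity
  have hne : h ≠ 0 := ne_of_gt hh0
  have hFd : Differentiable ℝ F := fun x => (hF x).differentiableAt
  have hFc : Continuous F := hFd.continuous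
  -- continuity of the energy as a function of the grid function
  have hEhc : Continuous (Eh M h ε F) := by
    unfold Eh gradE E1h
    apply Continuous.add
    · apply continuous_const.mul
      apply continuous_const.mul
      apply continuous_finset_sum
      intro p _
      apply Continuous.add
      · apply Continuous.pow
        apply Continuous.div_const
        exact Continuous.sub (continuous_apply _) (continuous_apply _)
      · apply Continuous.pow
        apply Continuous.div_const
        exact Continuous.sub (continuous_apply _) (continuous_apply _)
    · exact continuous_const.mul (continuous_finset_sum _ fun p _ =>
        hFc.comp (continuous_apply _))
  -- the key derivative computation
  have key : ∀ t : ℝ, 0 < t →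
      HasDerivAt (fun s => Eh M h ε F (u s))
        (-(h ^ 2 * ∑ p : Fin M × Fin M,
          ((ε ^ 2 • dLap M h (u t) + fun q => f (u t q)) p) ^ 2)) t := by
    intro t ht
    set wt : GridFun M := ε ^ 2 • dLap M h (u t) + fun q => f (u t q) with hwt
    set v : GridFun M := u t with hv
    have hcoord : ∀ p : Fin M × Fin M, HasDerivAt (fun s => u s p) (wt p) t :=
      hasDerivAt_pi.mp (hode t ht)
    -- explicit formula for wt
    have hwp : ∀ p : Fin M × Fin M, wt p =
        ε ^ 2 * ((v (p.1 + 1, p.2) + v (p.1 - 1, p.2) + v (p.1, p.2 + 1) + v (p.1, p.2 - 1)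
          - 4 * v p) / h ^ 2) + f (v p) := by
      intro p
      simp only [hwt, Pi.add_apply, Pi.smul_apply, smul_eq_mul, dLap,
        LinearMap.coe_toContinuousLinearMap', dLapL, LinearMap.coe_mk, AddHom.coe_mk, hv]
    -- derivative of the gradient energy
    have hg : HasDerivAt (fun s => gradE M h ε (u s))
        (ε ^ 2 / 2 * (h ^ 2 * ∑ p : Fin M × Fin M,
          (2 * ((v (p.1 + 1, p.2) - v p) / h) * ((wt (p.1 + 1, p.2) - wt p) / h)
            + 2 * ((v (p.1, p.2 + 1) - v p) / h) * ((wt (p.1, p.2 + 1) - wt p) / h)))) t := by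
      apply HasDerivAt.const_mul
      apply HasDerivAt.const_mul
      apply HasDerivAt.fun_sum
      intro p _
      have hd1 : HasDerivAt (fun s => ((u s (p.1 + 1, p.2) - u s p) / h) ^ 2)
          (2 * ((v (p.1 + 1, p.2) - v p) / h) * ((wt (p.1 + 1, p.2) - wt p) / h)) t := by
        have := (((hcoord (p.1 + 1, p.2)).sub (hcoord p)).div_const h).fun_pow 2
        simpa using this
      have hd2 : HasDerivAt (fun s => ((u s (p.1, p.2 + 1) - u s p) / h) ^ 2)
          (2 * ((v (p.1, p.2 + 1) - v p) / h) * ((wt (p.1, p.2 + 1) - wt p) / h)) t := by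
        have := (((hcoord (p.1, p.2 + 1)).sub (hcoord p)).div_const h).fun_pow 2
        simpa using this
      exact hd1.add hd2
    -- derivative of the bulk energy
    have hE1 : HasDerivAt (fun s => E1h M h F (u s))
        (h ^ 2 * ∑ p : Fin M × Fin M, -f (v p) * wt p) t := by
      apply HasDerivAt.const_mul
      apply HasDerivAt.fun_sum
      intro p _
      exact (hF (v p)).comp t (hcoord p)
    have hsum := hg.add hE1
    have hredux :
        ε ^ 2 / 2 * (h ^ 2 * ∑ p : Fin M × Fin M,
          (2 * ((v (p.1 + 1, p.2) - v p) / h) * ((wt (p.1 + 1, p.2) - wt p) / h)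
            + 2 * ((v (p.1, p.2 + 1) - v p) / h) * ((wt (p.1, p.2 + 1) - wt p) / h)))
        + h ^ 2 * ∑ p : Fin M × Fin M, -f (v p) * wt p
        = -(h ^ 2 * ∑ p : Fin M × Fin M, wt p ^ 2) := by
      have step1 : ∀ p : Fin M × Fin M,
          2 * ((v (p.1 + 1, p.2) - v p) / h) * ((wt (p.1 + 1, p.2) - wt p) / h)
            + 2 * ((v (p.1, p.2 + 1) - v p) / h) * ((wt (p.1, p.2 + 1) - wt p) / h)
          = 2 / h ^ 2 * ((v (p.1 + 1, p.2) - v p) * (wt (p.1 + 1, p.2) - wt p)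
            + (v (p.1, p.2 + 1) - v p) * (wt (p.1, p.2 + 1) - wt p)) := by
        intro p; field_simp
      rw [Finset.sum_congr rfl (fun p _ => step1 p), ← Finset.mul_sum, sbp v wt]
      have step2 : ∀ p : Fin M × Fin M,
          ε ^ 2 / 2 * (h ^ 2 * (2 / h ^ 2
            * ((4 * v p - v (p.1 + 1, p.2) - v (p.1 - 1, p.2) - v (p.1, p.2 + 1)
              - v (p.1, p.2 - 1)) * wt p)))
          + h ^ 2 * (-f (v p) * wt p) = -(h ^ 2 * wt p ^ 2) := by
        intro p
        rw [hwp p]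
        field_simp
        ring
      calc ε ^ 2 / 2 * (h ^ 2 * (2 / h ^ 2 * ∑ p : Fin M × Fin M,
              (4 * v p - v (p.1 + 1, p.2) - v (p.1 - 1, p.2) - v (p.1, p.2 + 1)
                - v (p.1, p.2 - 1)) * wt p))
            + h ^ 2 * ∑ p : Fin M × Fin M, -f (v p) * wt p
          = ∑ p : Fin M × Fin M,
              (ε ^ 2 / 2 * (h ^ 2 * (2 / h ^ 2
                * ((4 * v p - v (p.1 + 1, p.2) - v (p.1 - 1, p.2) - v (p.1, p.2 + 1)
                  - v (p.1, p.2 - 1)) * wt p)))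
              + h ^ 2 * (-f (v p) * wt p)) := by
            simp only [Finset.sum_add_distrib, Finset.mul_sum]
        _ = ∑ p : Fin M × Fin M, -(h ^ 2 * wt p ^ 2) := by
            exact Finset.sum_congr rfl fun p _ => step2 p
        _ = -(h ^ 2 * ∑ p : Fin M × Fin M, wt p ^ 2) := by
            simp [Finset.mul_sum]
    rw [hredux] at hsum
    exact hsum
  apply antitoneOn_of_deriv_nonpos (convex_Ici 0)
  · exact hEhc.comp_continuousOn hu.continuousOn
  · intro t ht
    rw [interior_Ici] at ht
    exact ((key t ht).differentiableAt).differentiableWithinAt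
  · intro t ht
    rw [interior_Ici] at ht
    rw [(key t ht).deriv]
    have : (0 : ℝ) ≤ h ^ 2 * ∑ p : Fin M × Fin M,
        ((ε ^ 2 • dLap M h (u t) + fun q => f (u t q)) p) ^ 2 := by
      apply mul_nonneg (sq_nonneg h)
      exact Finset.sum_nonneg fun p _ => sq_nonneg _
    linarith
end
end

section
/- For any real numbers a ≥ 0 and b ≥ 0, the matrix exponential satisfies ‖e^{aΔ_h − bI}‖_∞ ≤ e^{−b}, where I is the M²×M² identity matrix and ‖·‖_∞ is the matrix norm induced by the maximum norm on ℝ^{M²}. -/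
open scoped BigOperators
noncomputable section

/-- Auxiliary: the four-neighbor shift-sum operator. -/
def shiftSum (M : ℕ) [NeZero M] : GridFun M →L[ℝ] GridFun M :=
  LinearMap.toContinuousLinearMap
  { toFun := fun v => fun p =>
      v (p.1 + 1, p.2) + v (p.1 - 1, p.2) + v (p.1, p.2 + 1) + v (p.1, p.2 - 1)
    map_add' := fun v w => by funext p; simp only [Pi.add_apply]; ring
    map_smul' := fun c v => by
      funext p; simp only [Pi.smul_apply, smul_eq_mul, RingHom.id_apply]; ring }

lemma shiftSum_norm_le (M : ℕ) [NeZero M] : ‖shiftSum M‖ ≤ 4 := by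
  refine ContinuousLinearMap.opNorm_le_bound _ (by norm_num) fun v => ?_
  rw [pi_norm_le_iff_of_nonneg (by positivity)]
  intro p
  have habs : ∀ q : Fin M × Fin M, |v q| ≤ ‖v‖ := fun q => by
    simpa [Real.norm_eq_abs] using norm_le_pi_norm v q
  simp only [shiftSum, LinearMap.coe_toContinuousLinearMap', LinearMap.coe_mk,
    AddHom.coe_mk, Real.norm_eq_abs]
  set A := v (p.1 + 1, p.2); set B := v (p.1 - 1, p.2)
  set C := v (p.1, p.2 + 1); set D := v (p.1, p.2 - 1)
  have h1 : |A + B + C + D| ≤ |A| + |B| + |C| + |D| := by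
    calc |A + B + C + D| ≤ |A + B + C| + |D| := abs_add_le _ _
      _ ≤ |A + B| + |C| + |D| := by linarith [abs_add_le (A + B) C]
      _ ≤ |A| + |B| + |C| + |D| := by linarith [abs_add_le A B]
  have := habs (p.1 + 1, p.2); have := habs (p.1 - 1, p.2)
  have := habs (p.1, p.2 + 1); have := habs (p.1, p.2 - 1)
  simp only [A, B, C, D] at *
  linarith

lemma my_norm_exp_le {𝔸 : Type*} [NormedRing 𝔸] [NormOneClass 𝔸] [NormedAlgebra ℝ 𝔸]
    [CompleteSpace 𝔸] (x : 𝔸) : ‖NormedSpace.exp x‖ ≤ Real.exp ‖x‖ := by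
  rw [NormedSpace.exp_eq_tsum (𝕂 := ℝ)]
  refine (norm_tsum_le_tsum_norm (NormedSpace.norm_expSeries_summable' x)).trans ?_
  rw [Real.exp_eq_exp_ℝ, NormedSpace.exp_eq_tsum_div]
  refine Summable.tsum_le_tsum (fun n => ?_) (NormedSpace.norm_expSeries_summable' x)
    (Real.summable_pow_div_factorial ‖x‖)
  rw [norm_smul, norm_inv, Real.norm_natCast, div_eq_inv_mul]
  gcongr
  cases n with
  | zero => simp
  | succ m => exact norm_pow_le' x (Nat.succ_pos m)

/-- For `a, b ≥ 0`, `‖e^{aΔ_h − bI}‖_∞ ≤ e^{−b}`, where the operator norm is the one induced by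
the maximum norm on `ℝ^{M²}` (the sup norm of the Pi type `GridFun M`). -/
theorem stmt_3 (M : ℕ) [NeZero M] (L h : ℝ) (hL : 0 < L) (hh : h = L / M)
    (a b : ℝ) (ha : 0 ≤ a) (hb : 0 ≤ b) :
    ‖NormedSpace.exp (a • dLap M h - b • (1 : GridFun M →L[ℝ] GridFun M))‖
      ≤ Real.exp (-b) := by
  have hM : (0:ℝ) < M := by exact_mod_cast Nat.pos_of_ne_zero (NeZero.ne M)
  have hhpos : 0 < h := by rw [hh]; positivity
  have hh2 : (0:ℝ) < h ^ 2 := by positivity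
  set c : ℝ := -(b + 4 * a / h ^ 2) with hc
  have hkey : a • dLap M h - b • (1 : GridFun M →L[ℝ] GridFun M)
      = (a / h ^ 2) • shiftSum M + c • (1 : GridFun M →L[ℝ] GridFun M) := by
    ext v p
    simp only [ContinuousLinearMap.sub_apply, ContinuousLinearMap.add_apply,
      ContinuousLinearMap.smul_apply, ContinuousLinearMap.one_apply, Pi.sub_apply,
      Pi.add_apply, Pi.smul_apply, smul_eq_mul, dLap, dLapL,
      LinearMap.coe_toContinuousLinearMap', LinearMap.coe_mk, AddHom.coe_mk, shiftSum, hc]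
    field_simp
    ring
  have h1 : c • (1 : GridFun M →L[ℝ] GridFun M)
      = algebraMap ℝ (GridFun M →L[ℝ] GridFun M) c := (Algebra.algebraMap_eq_smul_one c).symm
  rw [h1] at hkey
  have hcomm : Commute ((a / h ^ 2) • shiftSum M)
      (algebraMap ℝ (GridFun M →L[ℝ] GridFun M) c) :=
    (Algebra.commutes c ((a / h ^ 2) • shiftSum M)).symm
  rw [hkey, NormedSpace.exp_add_of_commute_of_mem_ball (𝕂 := ℝ) hcomm
    ((NormedSpace.expSeries_radius_eq_top ℝ (GridFun M →L[ℝ] GridFun M)).symm ▸ edist_lt_top _ _)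
    ((NormedSpace.expSeries_radius_eq_top ℝ (GridFun M →L[ℝ] GridFun M)).symm ▸ edist_lt_top _ _)]
  rw [← NormedSpace.algebraMap_exp_comm, ← Real.exp_eq_exp_ℝ]
  have hX : ‖(a / h ^ 2) • shiftSum M‖ ≤ 4 * a / h ^ 2 := by
    rw [norm_smul (a / h ^ 2) (shiftSum M), Real.norm_eq_abs, abs_of_nonneg (by positivity)]
    calc a / h ^ 2 * ‖shiftSum M‖ ≤ a / h ^ 2 * 4 :=
          mul_le_mul_of_nonneg_left (shiftSum_norm_le M) (by positivity)
      _ = 4 * a / h ^ 2 := by ring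
  calc ‖NormedSpace.exp ((a / h ^ 2) • shiftSum M) *
        algebraMap ℝ (GridFun M →L[ℝ] GridFun M) (Real.exp c)‖
      ≤ ‖NormedSpace.exp ((a / h ^ 2) • shiftSum M)‖ *
        ‖algebraMap ℝ (GridFun M →L[ℝ] GridFun M) (Real.exp c)‖ := norm_mul_le _ _
    _ ≤ Real.exp (4 * a / h ^ 2) * Real.exp c := by
        rw [norm_algebraMap', Real.norm_eq_abs, abs_of_nonneg (Real.exp_pos c).le]
        gcongr
        exact (my_norm_exp_le _).trans (Real.exp_le_exp.mpr hX)
    _ = Real.exp (-b) := by rw [← Real.exp_add]; congr 1; rw [hc]; field_simp; ring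
end
end

section
/- (Energy dissipation of GSAV-EI1.) For any stabilizing constant κ > 0, any time step τ > 0, any initial grid function u_init, and every n ≥ 0, the GSAV-EI1 iterates satisfy 𝓔_h(u^{n+1}, s^{n+1}) ≤ 𝓔_h(uⁿ, sⁿ). -/
open scoped BigOperators
noncomputable section

set_option linter.unusedSectionVars false
set_option maxHeartbeats 1000000
set_option synthInstance.maxHeartbeats 400000

namespace GSAV
variable {M : ℕ} [NeZero M]

def dot {M : ℕ} (v w : GridFun M) : ℝ := ∑ p : Fin M × Fin M, v p * w p

lemma dot_comm (v w : GridFun M) : dot v w = dot w v := by simp [dot, mul_comm]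
lemma dot_self_nonneg (v : GridFun M) : 0 ≤ dot v v :=
  Finset.sum_nonneg fun p _ => mul_self_nonneg _
lemma dot_add_left (v w x : GridFun M) : dot (v + w) x = dot v x + dot w x := by
  simp [dot, add_mul, Finset.sum_add_distrib]
lemma dot_add_right (x v w : GridFun M) : dot x (v + w) = dot x v + dot x w := by
  rw [dot_comm, dot_add_left, dot_comm v x, dot_comm w x]
lemma dot_sub_left (v w x : GridFun M) : dot (v - w) x = dot v x - dot w x := by
  simp [dot, sub_mul, Finset.sum_sub_distrib]
lemma dot_smul_left (r : ℝ) (v x : GridFun M) : dot (r • v) x = r * dot v x := by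
  simp [dot, Finset.mul_sum, mul_assoc]
lemma dot_zero_right (v : GridFun M) : dot v 0 = 0 := by simp [dot]
lemma dot_zero_left (v : GridFun M) : dot 0 v = 0 := by simp [dot]

lemma sum_shift (f : Fin M × Fin M → ℝ) (a b : Fin M) :
    ∑ p : Fin M × Fin M, f (p.1 + a, p.2 + b) = ∑ p : Fin M × Fin M, f p :=
  Fintype.sum_equiv (Equiv.prodCongr (Equiv.addRight a) (Equiv.addRight b))
    (fun p => f (p.1 + a, p.2 + b)) f (fun p => rfl)

lemma cross₁ (v w : GridFun M) :
    ∑ p : Fin M × Fin M, v (p.1 + 1, p.2) * w p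
      = ∑ p : Fin M × Fin M, v p * w (p.1 - 1, p.2) := by
  have := sum_shift (fun p => v p * w (p.1 - 1, p.2)) 1 0
  simp only [add_zero, add_sub_cancel_right, Prod.mk.eta] at this
  exact this

lemma cross₂ (v w : GridFun M) :
    ∑ p : Fin M × Fin M, v (p.1, p.2 + 1) * w p
      = ∑ p : Fin M × Fin M, v p * w (p.1, p.2 - 1) := by
  have := sum_shift (fun p => v p * w (p.1, p.2 - 1)) 0 1
  simp only [add_zero, add_sub_cancel_right, Prod.mk.eta] at this
  exact this

lemma cross₁' (v w : GridFun M) :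
    ∑ p : Fin M × Fin M, v (p.1 - 1, p.2) * w p
      = ∑ p : Fin M × Fin M, v p * w (p.1 + 1, p.2) := by
  have := sum_shift (fun p => v (p.1 - 1, p.2) * w p) 1 0
  simp only [add_zero, add_sub_cancel_right, Prod.mk.eta] at this
  exact this.symm

lemma cross₂' (v w : GridFun M) :
    ∑ p : Fin M × Fin M, v (p.1, p.2 - 1) * w p
      = ∑ p : Fin M × Fin M, v p * w (p.1, p.2 + 1) := by
  have := sum_shift (fun p => v (p.1, p.2 - 1) * w p) 0 1
  simp only [add_zero, add_sub_cancel_right, Prod.mk.eta] at this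
  exact this.symm

lemma shift_sq₁ (v : GridFun M) :
    ∑ p : Fin M × Fin M, v (p.1 + 1, p.2) ^ 2 = ∑ p : Fin M × Fin M, v p ^ 2 := by
  simpa using sum_shift (fun p => v p ^ 2) 1 0

lemma shift_sq₂ (v : GridFun M) :
    ∑ p : Fin M × Fin M, v (p.1, p.2 + 1) ^ 2 = ∑ p : Fin M × Fin M, v p ^ 2 := by
  simpa using sum_shift (fun p => v p ^ 2) 0 1

lemma dLap_apply (h : ℝ) (v : GridFun M) (p : Fin M × Fin M) :
    dLap M h v p = (v (p.1 + 1, p.2) + v (p.1 - 1, p.2) + v (p.1, p.2 + 1)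
      + v (p.1, p.2 - 1) - 4 * v p) / h ^ 2 := rfl

lemma dot_lap (h : ℝ) (v w : GridFun M) :
    dot (dLap M h v) w =
      (∑ p : Fin M × Fin M, v (p.1 + 1, p.2) * w p
       + ∑ p : Fin M × Fin M, v (p.1 - 1, p.2) * w p
       + ∑ p : Fin M × Fin M, v (p.1, p.2 + 1) * w p
       + ∑ p : Fin M × Fin M, v (p.1, p.2 - 1) * w p
       - 4 * ∑ p : Fin M × Fin M, v p * w p) / h ^ 2 := by
  simp only [dot, dLap_apply, div_mul_eq_mul_div, ← Finset.sum_div, add_mul, sub_mul,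
    Finset.sum_add_distrib, Finset.sum_sub_distrib, Finset.mul_sum, mul_assoc]

lemma lap_symm (h : ℝ) (v w : GridFun M) :
    dot (dLap M h v) w = dot v (dLap M h w) := by
  rw [dot_lap, dot_comm, dot_lap]
  rw [cross₁ v w, cross₁' v w, cross₂ v w, cross₂' v w]
  congr 1
  have e1 : ∑ p : Fin M × Fin M, w (p.1 + 1, p.2) * v p
      = ∑ p : Fin M × Fin M, v p * w (p.1 + 1, p.2) := by
    exact Finset.sum_congr rfl fun p _ => mul_comm _ _
  have e2 : ∑ p : Fin M × Fin M, w (p.1 - 1, p.2) * v p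
      = ∑ p : Fin M × Fin M, v p * w (p.1 - 1, p.2) := by
    exact Finset.sum_congr rfl fun p _ => mul_comm _ _
  have e3 : ∑ p : Fin M × Fin M, w (p.1, p.2 + 1) * v p
      = ∑ p : Fin M × Fin M, v p * w (p.1, p.2 + 1) := by
    exact Finset.sum_congr rfl fun p _ => mul_comm _ _
  have e4 : ∑ p : Fin M × Fin M, w (p.1, p.2 - 1) * v p
      = ∑ p : Fin M × Fin M, v p * w (p.1, p.2 - 1) := by
    exact Finset.sum_congr rfl fun p _ => mul_comm _ _
  have e5 : ∑ p : Fin M × Fin M, w p * v p = ∑ p : Fin M × Fin M, v p * w p := by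
    exact Finset.sum_congr rfl fun p _ => mul_comm _ _
  rw [e1, e2, e3, e4, e5]; ring

/-- discrete Dirichlet form -/
def Q {M : ℕ} [NeZero M] (v : GridFun M) : ℝ :=
  ∑ p : Fin M × Fin M, ((v (p.1 + 1, p.2) - v p) ^ 2 + (v (p.1, p.2 + 1) - v p) ^ 2)

lemma Q_nonneg (v : GridFun M) : 0 ≤ Q v :=
  Finset.sum_nonneg fun p _ => add_nonneg (sq_nonneg _) (sq_nonneg _)

lemma dot_lap_self (h : ℝ) (v : GridFun M) :
    dot (dLap M h v) v = -Q v / h ^ 2 := by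
  rw [dot_lap]
  congr 1
  have hQ : Q v = ∑ p : Fin M × Fin M, v (p.1 + 1, p.2) ^ 2
      + ∑ p : Fin M × Fin M, v (p.1, p.2 + 1) ^ 2
      + 2 * ∑ p : Fin M × Fin M, v p ^ 2
      - 2 * ∑ p : Fin M × Fin M, v (p.1 + 1, p.2) * v p
      - 2 * ∑ p : Fin M × Fin M, v (p.1, p.2 + 1) * v p := by
    simp only [Q, Finset.mul_sum, ← Finset.sum_add_distrib, ← Finset.sum_sub_distrib]
    exact Finset.sum_congr rfl fun p _ => by ring
  have e2 : ∑ p : Fin M × Fin M, v p * v p = ∑ p : Fin M × Fin M, v p ^ 2 :=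
    Finset.sum_congr rfl fun p _ => (sq (v p)).symm ▸ by ring
  rw [hQ, shift_sq₁, shift_sq₂, cross₁' v v, cross₂' v v, e2]
  have e3 : ∑ p : Fin M × Fin M, v p * v (p.1 + 1, p.2)
      = ∑ p : Fin M × Fin M, v (p.1 + 1, p.2) * v p :=
    Finset.sum_congr rfl fun p _ => mul_comm _ _
  have e4 : ∑ p : Fin M × Fin M, v p * v (p.1, p.2 + 1)
      = ∑ p : Fin M × Fin M, v (p.1, p.2 + 1) * v p :=
    Finset.sum_congr rfl fun p _ => mul_comm _ _
  rw [e3, e4]; ring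


/-! ### Symmetric operators and the exponential -/

def Symm {M : ℕ} (T : GridFun M →L[ℝ] GridFun M) : Prop :=
  ∀ v w, dot (T v) w = dot v (T w)

lemma Symm.pow {T : GridFun M →L[ℝ] GridFun M} (hT : Symm T) : ∀ n, Symm (T ^ n) := by
  intro n
  induction n with
  | zero => intro v w; simp [pow_zero, ContinuousLinearMap.one_apply]
  | succ n ih =>
      intro v w
      calc dot ((T ^ (n+1)) v) w = dot ((T ^ n) (T v)) w := by
            rw [pow_succ, ContinuousLinearMap.mul_apply]
        _ = dot (T v) ((T ^ n) w) := ih _ _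
        _ = dot v (T ((T ^ n) w)) := hT _ _
        _ = dot v ((T ^ (n+1)) w) := by rw [pow_succ', ContinuousLinearMap.mul_apply]

/-- evaluation of `dot (T v) w` as a continuous linear functional in `T` -/
noncomputable def dotEval (v w : GridFun M) :
    (GridFun M →L[ℝ] GridFun M) →L[ℝ] ℝ :=
  LinearMap.toContinuousLinearMap
    { toFun := fun T => dot (T v) w
      map_add' := fun S T => by simp [ContinuousLinearMap.add_apply, dot_add_left]
      map_smul' := fun c T => by
        simp [ContinuousLinearMap.smul_apply, dot_smul_left] }

lemma dot_exp (T : GridFun M →L[ℝ] GridFun M) (v w : GridFun M) :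
    dot (NormedSpace.exp T v) w = ∑' n : ℕ, ((n.factorial : ℝ)⁻¹ * dot ((T ^ n) v) w) := by
  have h1 : dot (NormedSpace.exp T v) w = dotEval v w (NormedSpace.exp T) := rfl
  rw [h1, NormedSpace.exp_eq_tsum ℝ]
  rw [ContinuousLinearMap.map_tsum _ (NormedSpace.expSeries_summable' (𝕂 := ℝ) T)]
  congr 1
  funext n
  show dot (((n.factorial : ℝ)⁻¹ • T ^ n) v) w = _
  rw [ContinuousLinearMap.smul_apply, dot_smul_left]

lemma Symm.exp {T : GridFun M →L[ℝ] GridFun M} (hT : Symm T) :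
    Symm (NormedSpace.exp T) := by
  intro v w
  rw [dot_exp, dot_comm, dot_exp]
  congr 1; funext n
  rw [hT.pow n v w, dot_comm]


lemma Symm.neg {T : GridFun M →L[ℝ] GridFun M} (hT : Symm T) : Symm (-T) := by
  intro v w
  have h1 : (-T) v = (-1 : ℝ) • (T v) := by simp
  have h2 : (-T) w = (-1 : ℝ) • (T w) := by simp
  calc dot ((-T) v) w = (-1) * dot (T v) w := by rw [h1, dot_smul_left]
    _ = (-1) * dot v (T w) := by rw [hT]
    _ = dot v ((-T) w) := by rw [dot_comm v, h2, dot_comm v, dot_smul_left]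

lemma Symm.smul (r : ℝ) {T : GridFun M →L[ℝ] GridFun M} (hT : Symm T) : Symm (r • T) := by
  intro v w
  have h1 : (r • T) v = r • (T v) := rfl
  have h2 : (r • T) w = r • (T w) := rfl
  rw [h1, h2, dot_smul_left, dot_comm (v := v), dot_smul_left, hT, dot_comm]

section Core

variable (Lk : GridFun M →L[ℝ] GridFun M)

/-- the semigroup `E t = e^{-t L}` -/
noncomputable def Ee (Lk : GridFun M →L[ℝ] GridFun M) (t : ℝ) :
    GridFun M →L[ℝ] GridFun M :=
  NormedSpace.exp (t • (-Lk))

lemma Ee_continuous : Continuous (Ee Lk) := by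
  letI : NormedAlgebra ℚ (GridFun M →L[ℝ] GridFun M) := .restrictScalars ℚ ℝ _
  exact NormedSpace.exp_continuous.comp (continuous_id.smul continuous_const)

lemma Ee_apply_continuous (u : GridFun M) : Continuous (fun t => Ee Lk t u) :=
  (ContinuousLinearMap.apply ℝ (GridFun M) u).continuous.comp (Ee_continuous Lk)

lemma Ee_zero : Ee Lk 0 = 1 := by
  simp [Ee, NormedSpace.exp_zero]

lemma Ee_symm (hLk : Symm Lk) (t : ℝ) : Symm (Ee Lk t) :=
  Symm.exp (Symm.smul t (Symm.neg hLk))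

lemma Ee_mul (s t : ℝ) : Ee Lk s * Ee Lk t = Ee Lk (s + t) := by
  letI : NormedAlgebra ℚ (GridFun M →L[ℝ] GridFun M) := .restrictScalars ℚ ℝ _
  rw [Ee, Ee, Ee, add_smul, NormedSpace.exp_add_of_commute]
  exact ((Commute.refl (-Lk)).smul_left s).smul_right t

lemma Ee_hasDerivAt (t : ℝ) :
    HasDerivAt (Ee Lk) (Ee Lk t * (-Lk)) t :=
  hasDerivAt_exp_smul_const (-Lk) t

lemma Ee_apply_hasDerivAt (u : GridFun M) (t : ℝ) :
    HasDerivAt (fun t => Ee Lk t u) (-(Ee Lk t (Lk u))) t := by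
  have h := (Ee_hasDerivAt Lk t).clm_apply (hasDerivAt_const t u)
  simpa using h

lemma Ee_comm_Lk (t : ℝ) (u : GridFun M) : Ee Lk t (Lk u) = Lk (Ee Lk t u) := by
  have hc : Commute Lk (Ee Lk t) :=
    Commute.exp_right ((Commute.refl Lk).neg_right.smul_right t)
  have := congrArg (fun T => T u) hc.eq
  simpa [ContinuousLinearMap.mul_apply] using this.symm

lemma Ee_integral_Lk (u : GridFun M) (t : ℝ) :
    ∫ θ in (0:ℝ)..t, Ee Lk θ (Lk u) = u - Ee Lk t u := by
  have hd : ∀ θ ∈ Set.uIcc (0:ℝ) t, HasDerivAt (fun θ => -(Ee Lk θ u)) (Ee Lk θ (Lk u)) θ := by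
    intro θ _
    simpa using (Ee_apply_hasDerivAt Lk u θ).fun_neg
  have hint : IntervalIntegrable (fun θ => Ee Lk θ (Lk u)) MeasureTheory.volume 0 t :=
    (Ee_apply_continuous Lk (Lk u)).intervalIntegrable 0 t
  rw [intervalIntegral.integral_eq_sub_of_hasDerivAt hd hint]
  simp only [Ee_zero, ContinuousLinearMap.one_apply]
  abel


/-- primitive of the semigroup applied to `c` -/
noncomputable def kk (Lk : GridFun M →L[ℝ] GridFun M) (c : GridFun M) (t : ℝ) : GridFun M :=
  ∫ θ in (0:ℝ)..t, Ee Lk θ c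

lemma kk_hasDerivAt (c : GridFun M) (t : ℝ) :
    HasDerivAt (kk Lk c) (Ee Lk t c) t :=
  intervalIntegral.integral_hasDerivAt_right
    ((Ee_apply_continuous Lk c).intervalIntegrable 0 t)
    ((Ee_apply_continuous Lk c).stronglyMeasurableAtFilter _ _)
    (Ee_apply_continuous Lk c).continuousAt

lemma kk_continuous (c : GridFun M) : Continuous (kk Lk c) :=
  continuous_iff_continuousAt.mpr fun t => (kk_hasDerivAt Lk c t).continuousAt

lemma kk_zero (c : GridFun M) : kk Lk c 0 = 0 :=
  intervalIntegral.integral_same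

lemma Lk_kk (c : GridFun M) (t : ℝ) :
    Lk (kk Lk c t) = c - Ee Lk t c := by
  rw [kk, ← ContinuousLinearMap.intervalIntegral_comp_comm Lk
    ((Ee_apply_continuous Lk c).intervalIntegrable 0 t)]
  have : ∀ θ, Lk (Ee Lk θ c) = Ee Lk θ (Lk c) := fun θ => (Ee_comm_Lk Lk θ c).symm
  simp_rw [this]
  exact Ee_integral_Lk Lk c t

lemma dot_kk (c w : GridFun M) (t : ℝ) :
    dot (kk Lk c t) w = ∫ θ in (0:ℝ)..t, dot (Ee Lk θ c) w := by
  have hp : ∀ p : Fin M × Fin M, kk Lk c t p = ∫ θ in (0:ℝ)..t, Ee Lk θ c p := by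
    intro p
    exact (ContinuousLinearMap.intervalIntegral_comp_comm
      (ContinuousLinearMap.proj (R := ℝ) (φ := fun _ : Fin M × Fin M => ℝ) p)
      ((Ee_apply_continuous Lk c).intervalIntegrable 0 t)).symm
  rw [show dot (kk Lk c t) w = ∑ p : Fin M × Fin M, (kk Lk c t) p * w p from rfl]
  simp_rw [hp]
  have : ∀ p : Fin M × Fin M, (∫ θ in (0:ℝ)..t, Ee Lk θ c p) * w p
      = ∫ θ in (0:ℝ)..t, (Ee Lk θ c p * w p) := by
    intro p
    rw [← intervalIntegral.integral_mul_const]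
  simp_rw [this]
  rw [← intervalIntegral.integral_finset_sum]
  · rfl
  · intro p _
    exact (((continuous_apply p).comp (Ee_apply_continuous Lk c)).mul continuous_const)
      |>.intervalIntegrable 0 t

lemma dot_Ee_nonneg (hLk : Symm Lk) (c : GridFun M) (s t : ℝ) :
    0 ≤ dot (Ee Lk s c) (Ee Lk t c) := by
  have h1 : dot (Ee Lk s c) (Ee Lk t c) = dot c (Ee Lk s (Ee Lk t c)) :=
    Ee_symm Lk hLk s c (Ee Lk t c)
  have h2 : Ee Lk s (Ee Lk t c) = Ee Lk ((s+t)/2) (Ee Lk ((s+t)/2) c) := by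
    have e1 : Ee Lk s (Ee Lk t c) = (Ee Lk s * Ee Lk t) c := rfl
    have e2 : Ee Lk ((s+t)/2) (Ee Lk ((s+t)/2) c)
        = (Ee Lk ((s+t)/2) * Ee Lk ((s+t)/2)) c := rfl
    rw [e1, e2, Ee_mul, Ee_mul, add_halves]
  rw [h1, h2, ← Ee_symm Lk hLk ((s+t)/2) c (Ee Lk ((s+t)/2) c)]
  exact dot_self_nonneg _

lemma key_nonneg (hLk : Symm Lk) (m : ℝ) (hm : 0 ≤ m) (c : GridFun M) (τ : ℝ) (hτ : 0 ≤ τ) :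
    0 ≤ 2 * dot c (kk Lk c τ)
      - dot (Lk (kk Lk c τ) - m • (kk Lk c τ)) (kk Lk c τ) := by
  set φ : ℝ → ℝ := fun t => 2 * dot c (kk Lk c t)
      - dot (Lk (kk Lk c t) - m • (kk Lk c t)) (kk Lk c t) with hφ
  set φ' : ℝ → ℝ := fun t => 2 * dot (Ee Lk t c) (Ee Lk t c)
      + 2 * m * dot (kk Lk c t) (Ee Lk t c) with hφ'
  have hAsymm : ∀ v w : GridFun M, dot (Lk v - m • v) w = dot v (Lk w - m • w) := by
    intro v w
    have e1 : dot (Lk v - m • v) w = dot v (Lk w) - m * dot v w := by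
      rw [dot_sub_left, dot_smul_left, hLk v w]
    have e2 : dot v (Lk w - m • w) = dot v (Lk w) - m * dot v w := by
      rw [dot_comm v, dot_sub_left, dot_smul_left, dot_comm (Lk w) v, dot_comm w v]
    rw [e1, e2]
  have hcomp : ∀ (t : ℝ) (p : Fin M × Fin M),
      HasDerivAt (fun t => kk Lk c t p) (Ee Lk t c p) t := by
    intro t p
    exact hasDerivAt_pi.mp (kk_hasDerivAt Lk c t) p
  have hAcomp : ∀ (t : ℝ) (p : Fin M × Fin M),
      HasDerivAt (fun t => (Lk (kk Lk c t) - m • (kk Lk c t)) p)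
        ((Lk (Ee Lk t c) - m • (Ee Lk t c)) p) t := by
    intro t p
    have hA : HasDerivAt (fun t => Lk (kk Lk c t) - m • (kk Lk c t))
        (Lk (Ee Lk t c) - m • (Ee Lk t c)) t := by
      exact ((Lk.hasFDerivAt.comp_hasDerivAt t (kk_hasDerivAt Lk c t))).sub
        ((kk_hasDerivAt Lk c t).const_smul m)
    exact hasDerivAt_pi.mp hA p
  have hd : ∀ t : ℝ, HasDerivAt φ (φ' t) t := by
    intro t
    have h1 : HasDerivAt (fun t => dot c (kk Lk c t)) (dot c (Ee Lk t c)) t := by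
      have := HasDerivAt.fun_sum (u := Finset.univ)
        (A := fun (p : Fin M × Fin M) t => c p * kk Lk c t p)
        (A' := fun p => c p * Ee Lk t c p) (x := t)
        (fun p _ => (hcomp t p).const_mul (c p))
      exact this
    have h2 : HasDerivAt (fun t => dot (Lk (kk Lk c t) - m • (kk Lk c t)) (kk Lk c t))
        (∑ p : Fin M × Fin M, ((Lk (Ee Lk t c) - m • (Ee Lk t c)) p * kk Lk c t p
          + (Lk (kk Lk c t) - m • (kk Lk c t)) p * Ee Lk t c p)) t := by
      have := HasDerivAt.fun_sum (u := Finset.univ)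
        (A := fun (p : Fin M × Fin M) t =>
          (Lk (kk Lk c t) - m • (kk Lk c t)) p * kk Lk c t p)
        (A' := fun p => (Lk (Ee Lk t c) - m • (Ee Lk t c)) p * kk Lk c t p
          + (Lk (kk Lk c t) - m • (kk Lk c t)) p * Ee Lk t c p) (x := t)
        (fun p _ => (hAcomp t p).mul (hcomp t p))
      exact this
    have h2' : (∑ p : Fin M × Fin M, ((Lk (Ee Lk t c) - m • (Ee Lk t c)) p * kk Lk c t p
          + (Lk (kk Lk c t) - m • (kk Lk c t)) p * Ee Lk t c p))
        = 2 * dot (Lk (kk Lk c t) - m • (kk Lk c t)) (Ee Lk t c) := by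
      rw [Finset.sum_add_distrib]
      have e1 : (∑ p : Fin M × Fin M, (Lk (Ee Lk t c) - m • (Ee Lk t c)) p * kk Lk c t p)
          = dot (Lk (Ee Lk t c) - m • (Ee Lk t c)) (kk Lk c t) := rfl
      have e2 : (∑ p : Fin M × Fin M, (Lk (kk Lk c t) - m • (kk Lk c t)) p * Ee Lk t c p)
          = dot (Lk (kk Lk c t) - m • (kk Lk c t)) (Ee Lk t c) := rfl
      rw [e1, e2, hAsymm, dot_comm (Ee Lk t c)]
      ring
    rw [h2'] at h2
    have := (h1.const_mul (2:ℝ)).fun_sub h2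
    refine this.congr_deriv ?_
    have hLkk := Lk_kk Lk c t
    rw [hφ']
    rw [show dot (Lk (kk Lk c t) - m • kk Lk c t) (Ee Lk t c)
        = dot (Lk (kk Lk c t)) (Ee Lk t c) - m * dot (kk Lk c t) (Ee Lk t c) by
      rw [dot_sub_left, dot_smul_left]]
    rw [hLkk, dot_sub_left]
    rw [show dot c (Ee Lk t c) = dot (Ee Lk t c) c from dot_comm _ _] at *
    ring_nf
  have hφ'cont : Continuous φ' := by
    have hE : Continuous fun t => Ee Lk t c := Ee_apply_continuous Lk c
    have hk : Continuous (kk Lk c) := kk_continuous Lk c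
    have hdot : ∀ (f g : ℝ → GridFun M), Continuous f → Continuous g →
        Continuous (fun t => dot (f t) (g t)) := by
      intro f g hf hg
      have : (fun t => dot (f t) (g t))
          = fun t => ∑ p : Fin M × Fin M, f t p * g t p := rfl
      rw [this]
      exact continuous_finset_sum _ fun p _ =>
        ((continuous_apply p).comp hf).mul ((continuous_apply p).comp hg)
    exact (continuous_const.mul (hdot _ _ hE hE)).add (continuous_const.mul (hdot _ _ hk hE))
  have hφ0 : φ 0 = 0 := by
    simp [hφ, kk_zero, dot_zero_right, dot_comm]
  have hφτ : φ τ = ∫ t in (0:ℝ)..τ, φ' t := by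
    rw [intervalIntegral.integral_eq_sub_of_hasDerivAt (fun t _ => hd t)
      (hφ'cont.intervalIntegrable 0 τ), hφ0, sub_zero]
  have hint : 0 ≤ ∫ t in (0:ℝ)..τ, φ' t := by
    apply intervalIntegral.integral_nonneg hτ
    intro t ht
    have ht0 : 0 ≤ t := ht.1
    have hkE : 0 ≤ dot (kk Lk c t) (Ee Lk t c) := by
      rw [dot_kk]
      exact intervalIntegral.integral_nonneg ht0 fun θ _ => dot_Ee_nonneg Lk hLk c θ t
    have := dot_self_nonneg (Ee Lk t c)
    rw [hφ']
    positivity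
  calc (0:ℝ) ≤ ∫ t in (0:ℝ)..τ, φ' t := hint
    _ = φ τ := hφτ.symm
    _ = _ := rfl

end Core

end GSAV

namespace GSAV
variable {M : ℕ} [NeZero M]

lemma gradE_eq_Q (h ε : ℝ) (hh : h ≠ 0) (v : GridFun M) :
    gradE M h ε v = ε ^ 2 / 2 * Q v := by
  rw [gradE, Q]
  congr 1
  rw [Finset.mul_sum]
  refine Finset.sum_congr rfl fun p _ => ?_
  field_simp

lemma Lkappa_apply (h ε κ g0 : ℝ) (v : GridFun M) :
    Lkappa M h ε κ g0 v = (κ * g0) • v - ε ^ 2 • dLap M h v := by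
  simp [Lkappa, ContinuousLinearMap.sub_apply, ContinuousLinearMap.smul_apply]

lemma Lkappa_symm (h ε κ g0 : ℝ) : Symm (Lkappa M h ε κ g0) := by
  intro v w
  have e1 : dot (Lkappa M h ε κ g0 v) w
      = (κ * g0) * dot v w - ε ^ 2 * dot (dLap M h v) w := by
    rw [Lkappa_apply, dot_sub_left, dot_smul_left, dot_smul_left]
  have e2 : dot v (Lkappa M h ε κ g0 w)
      = (κ * g0) * dot v w - ε ^ 2 * dot (dLap M h v) w := by
    rw [dot_comm, Lkappa_apply, dot_sub_left, dot_smul_left, dot_smul_left,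
      dot_comm w v, lap_symm h w v, dot_comm w (dLap M h v)]
  rw [e1, e2]

lemma dot_A_self (h ε κ g0 : ℝ) (hh : h ≠ 0) (v : GridFun M) :
    h ^ 2 / 2 * dot (Lkappa M h ε κ g0 v - (κ * g0) • v) v = gradE M h ε v := by
  have e1 : Lkappa M h ε κ g0 v - (κ * g0) • v = (-(ε ^ 2)) • dLap M h v := by
    rw [Lkappa_apply]; funext p
    simp only [Pi.sub_apply, Pi.smul_apply, smul_eq_mul]; ring
  rw [e1, dot_smul_left, dot_lap_self, gradE_eq_Q h ε hh]
  field_simp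

lemma step_dissip (h ε κ τ : ℝ) (hh : h ≠ 0) (f F σ : ℝ → ℝ)
    (hσpos : ∀ x, 0 < σ x) (hκ : 0 < κ) (hτ : 0 ≤ τ) (us : GridFun M × ℝ) :
    modE M h ε (EI1step M h ε κ τ f F σ us).1 (EI1step M h ε κ τ f F σ us).2
      ≤ modE M h ε us.1 us.2 := by
  obtain ⟨u, s⟩ := us
  set g0 := gFun M h F σ u s with hg0def
  have hg0 : 0 < g0 := div_pos (hσpos _) (hσpos _)
  set m := κ * g0 with hmdef
  have hm : 0 < m := mul_pos hκ hg0
  set Lk := Lkappa M h ε κ g0 with hLkdef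
  set b := Nkappa M h κ g0 f F σ u s with hbdef
  set u1 := (NormedSpace.exp (-(τ • Lk))) u
    + (∫ θ in (0:ℝ)..τ, NormedSpace.exp (-((τ - θ) • Lk))) b with hu1def
  have hstep : EI1step M h ε κ τ f F σ (u, s)
      = (u1, s - g0 * gridInner M h (fun p => f (u p)) (u1 - u)) := rfl
  rw [hstep]
  show modE M h ε u1 (s - g0 * gridInner M h (fun p => f (u p)) (u1 - u))
      ≤ modE M h ε u s
  have hexp : ∀ t : ℝ, NormedSpace.exp (-(t • Lk)) = Ee Lk t := by
    intro t; rw [Ee, smul_neg]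
  set c := b - Lk u with hcdef
  set δ := kk Lk c τ with hδdef
  -- identify u1 - u with δ
  have hconts : Continuous fun θ => Ee Lk (τ - θ) :=
    (Ee_continuous Lk).comp (continuous_const.sub continuous_id)
  have hintJ : IntervalIntegrable (fun θ => NormedSpace.exp (-((τ - θ) • Lk)))
      MeasureTheory.volume 0 τ := by
    have e : (fun θ => NormedSpace.exp (-((τ - θ) • Lk))) = fun θ => Ee Lk (τ - θ) := by
      funext θ; rw [hexp]
    rw [e]; exact hconts.intervalIntegrable 0 τ
  have hJb : (∫ θ in (0:ℝ)..τ, NormedSpace.exp (-((τ - θ) • Lk))) b = kk Lk b τ := by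
    rw [ContinuousLinearMap.intervalIntegral_apply hintJ b]
    have e : ∀ θ, NormedSpace.exp (-((τ - θ) • Lk)) b = Ee Lk (τ - θ) b := fun θ => by
      rw [hexp]
    simp_rw [e]
    have := intervalIntegral.integral_comp_sub_left (a := (0:ℝ)) (b := τ)
      (fun θ => Ee Lk θ b) τ
    simpa [kk] using this
  have hksplit : δ = kk Lk b τ - (u - Ee Lk τ u) := by
    rw [hδdef, hcdef, kk, kk]
    have e : (fun θ => Ee Lk θ (b - Lk u))
        = fun θ => Ee Lk θ b - Ee Lk θ (Lk u) := by
      funext θ; rw [map_sub]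
    rw [e, intervalIntegral.integral_sub ((Ee_apply_continuous Lk b).intervalIntegrable 0 τ)
      ((Ee_apply_continuous Lk (Lk u)).intervalIntegrable 0 τ)]
    rw [show (∫ θ in (0:ℝ)..τ, Ee Lk θ (Lk u)) = u - Ee Lk τ u from Ee_integral_Lk Lk u τ]
  have hδeq : u1 - u = δ := by
    rw [hu1def, hJb, hexp, hksplit]
    abel
  have hu1split : u1 = u + δ := by rw [← hδeq]; abel
  -- symmetric shifted operator facts
  have hLksymm : Symm Lk := Lkappa_symm h ε κ g0
  have hAsymm : ∀ v w : GridFun M, dot (Lk v - m • v) w = dot v (Lk w - m • w) := by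
    intro v w
    have e1 : dot (Lk v - m • v) w = dot v (Lk w) - m * dot v w := by
      rw [dot_sub_left, dot_smul_left, hLksymm v w]
    have e2 : dot v (Lk w - m • w) = dot v (Lk w) - m * dot v w := by
      rw [dot_comm v, dot_sub_left, dot_smul_left, dot_comm (Lk w) v, dot_comm w v]
    rw [e1, e2]
  set a1 := dot (Lk u - m • u) u with ha1
  set a2 := dot (Lk u - m • u) δ with ha2
  set a3 := dot (Lk δ - m • δ) δ with ha3
  have hAadd : Lk (u + δ) - m • (u + δ) = (Lk u - m • u) + (Lk δ - m • δ) := by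
    rw [map_add, smul_add]; abel
  have hcross : dot (Lk δ - m • δ) u = a2 := by
    rw [hAsymm δ u, dot_comm δ]
  have egrad1 : gradE M h ε u1 = h ^ 2 / 2 * (a1 + 2 * a2 + a3) := by
    rw [← dot_A_self h ε κ g0 hh u1, ← hLkdef]
    rw [show Lk u1 - m • u1 = Lk (u + δ) - m • (u + δ) from by rw [hu1split]]
    rw [hAadd]
    rw [show (u1 : GridFun M) = u + δ from hu1split]
    rw [dot_add_left, dot_add_right, dot_add_right, hcross]
    rw [← ha1, ← ha3, ← ha2]
    ring
  have egrad0 : gradE M h ε u = h ^ 2 / 2 * a1 := by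
    rw [← dot_A_self h ε κ g0 hh u, ← hLkdef, ha1]
  have hbsplit : (b : GridFun M) = g0 • (fun p => f (u p)) + m • u := by
    funext p
    simp only [hbdef, Nkappa, Pi.add_apply, Pi.smul_apply, smul_eq_mul, hmdef, hg0def]
  have hLku : dot (Lk u) δ = a2 + m * dot u δ := by
    rw [show Lk u = (Lk u - m • u) + m • u from by abel]
    rw [dot_add_left, dot_smul_left, ha2]
  have efu : g0 * dot (fun p => f (u p)) δ = dot c δ + a2 := by
    have e1 : dot b δ = g0 * dot (fun p => f (u p)) δ + m * dot u δ := by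
      rw [show (b : GridFun M) = g0 • (fun p => f (u p)) + m • u from hbsplit,
        dot_add_left, dot_smul_left, dot_smul_left]
    have e2 : dot c δ = dot b δ - dot (Lk u) δ := by
      rw [hcdef, dot_sub_left]
    rw [hLku] at e2
    linarith [e1, e2]
  have hkey := key_nonneg Lk hLksymm m hm.le c τ hτ
  rw [← hδdef] at hkey
  have hgi : gridInner M h (fun p => f (u p)) (u1 - u) = h ^ 2 * dot (fun p => f (u p)) δ := by
    rw [hδeq]; rfl
  have hh2 : (0:ℝ) < h ^ 2 / 2 := by positivity
  calc modE M h ε u1 (s - g0 * gridInner M h (fun p => f (u p)) (u1 - u))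
      = h ^ 2 / 2 * (a1 + 2 * a2 + a3)
        + (s - h ^ 2 * (dot c δ + a2)) := by
        rw [modE, egrad1, hgi]
        rw [show g0 * (h ^ 2 * dot (fun p => f (u p)) δ)
            = h ^ 2 * (g0 * dot (fun p => f (u p)) δ) from by ring, efu]
    _ = h ^ 2 / 2 * a1 + s - h ^ 2 / 2 * (2 * dot c δ - a3) := by ring
    _ = modE M h ε u s - h ^ 2 / 2 * (2 * dot c δ - a3) := by rw [modE, egrad0]
    _ ≤ modE M h ε u s := by
        have := mul_nonneg hh2.le hkey
        linarith

end GSAV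


/-- Energy dissipation of GSAV-EI1: for any `κ > 0`, `τ > 0`, initial grid function, and `n ≥ 0`,
`𝓔_h(u^{n+1}, s^{n+1}) ≤ 𝓔_h(uⁿ, sⁿ)`. -/
theorem stmt_5 (M : ℕ) [NeZero M] (L h ε : ℝ) (hL : 0 < L) (hh : h = L / M) (hε : 0 < ε)
    (f F σ : ℝ → ℝ) (hF : ∀ x, HasDerivAt F (-f x) x)
    (hσ : ContDiff ℝ 1 σ) (hσpos : ∀ x, 0 < σ x) (hσmono : ∀ x, 0 ≤ deriv σ x)
    (κ : ℝ) (hκ : 0 < κ) (hf : ContDiff ℝ 1 f)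
    (τ : ℝ) (hτ : 0 < τ) (uinit : GridFun M) :
    ∀ n : ℕ,
      modE M h ε (EI1 M h ε κ τ f F σ uinit (n + 1)).1 (EI1 M h ε κ τ f F σ uinit (n + 1)).2
        ≤ modE M h ε (EI1 M h ε κ τ f F σ uinit n).1 (EI1 M h ε κ τ f F σ uinit n).2 := by
  have hM : (0:ℝ) < (M:ℝ) := by
    exact_mod_cast Nat.pos_of_ne_zero (NeZero.ne M)
  have hhne : h ≠ 0 := by
    rw [hh]; exact ne_of_gt (div_pos hL hM)
  intro n
  exact GSAV.step_dissip h ε κ τ hhne f F σ hσpos hκ hτ.le (EI1 M h ε κ τ f F σ uinit n)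
end
end

section
/- For any stabilizing constant κ > 0, any time step τ > 0, any initial grid function u_init, and every n ≥ 0, the GSAV-EI1 iterates satisfy sⁿ ≤ E_h(u_init), where E_h(v) := (ε²/2)‖∇_h v‖² + E_{1h}(v). -/
open scoped BigOperators
noncomputable section

namespace Stmt6Aux
set_option linter.unusedSectionVars false
open NormedSpace

variable {M : ℕ} [NeZero M]

def Bl (M : ℕ) (v w : GridFun M) : ℝ := ∑ p : Fin M × Fin M, v p * w p

def Dl (M : ℕ) [NeZero M] (v w : GridFun M) : ℝ :=
  ∑ p : Fin M × Fin M, ((v (p.1 + 1, p.2) - v p) * (w (p.1 + 1, p.2) - w p)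
    + (v (p.1, p.2 + 1) - v p) * (w (p.1, p.2 + 1) - w p))

lemma sum_shift (a b : Fin M) (G : Fin M × Fin M → ℝ) :
    ∑ p : Fin M × Fin M, G (p.1 + a, p.2 + b) = ∑ p : Fin M × Fin M, G p :=
  Fintype.sum_equiv ((Equiv.addRight a).prodCongr (Equiv.addRight b)) _ _ (fun _ => rfl)

lemma Dl_symm (v w : GridFun M) : Dl M v w = Dl M w v :=
  Finset.sum_congr rfl fun p _ => by ring

lemma Bl_symm (v w : GridFun M) : Bl M v w = Bl M w v :=
  Finset.sum_congr rfl fun p _ => by ring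

lemma key_sum (v w : GridFun M) :
    ∑ p : Fin M × Fin M,
      (v (p.1 + 1, p.2) + v (p.1 - 1, p.2) + v (p.1, p.2 + 1) + v (p.1, p.2 - 1) - 4 * v p) * w p
    = - Dl M v w := by
  have h1 : ∑ p : Fin M × Fin M, v (p.1 - 1, p.2) * w p
      = ∑ p : Fin M × Fin M, v p * w (p.1 + 1, p.2) := by
    have := sum_shift (M := M) 1 0 (fun p => v (p.1 - 1, p.2) * w p)
    simp only [add_sub_cancel_right, add_zero, Prod.mk.eta] at this
    exact this.symm
  have h2 : ∑ p : Fin M × Fin M, v (p.1, p.2 - 1) * w p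
      = ∑ p : Fin M × Fin M, v p * w (p.1, p.2 + 1) := by
    have := sum_shift (M := M) 0 1 (fun p => v (p.1, p.2 - 1) * w p)
    simp only [add_sub_cancel_right, add_zero, Prod.mk.eta] at this
    exact this.symm
  have h3 : ∑ p : Fin M × Fin M, v (p.1 + 1, p.2) * w (p.1 + 1, p.2)
      = ∑ p : Fin M × Fin M, v p * w p := by
    have := sum_shift (M := M) 1 0 (fun p => v p * w p)
    simpa using this
  have h4 : ∑ p : Fin M × Fin M, v (p.1, p.2 + 1) * w (p.1, p.2 + 1)
      = ∑ p : Fin M × Fin M, v p * w p := by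
    have := sum_shift (M := M) 0 1 (fun p => v p * w p)
    simpa using this
  simp only [Dl, add_mul, sub_mul, mul_sub, mul_add, Finset.sum_add_distrib,
    Finset.sum_sub_distrib, mul_assoc, ← Finset.mul_sum, neg_sub, neg_add_rev]
  linarith [h1, h2, h3, h4]

end Stmt6Aux
namespace Stmt6Aux
set_option linter.unusedSectionVars false
open NormedSpace
variable {M : ℕ} [NeZero M]

lemma dLap_apply (h : ℝ) (v : GridFun M) (p : Fin M × Fin M) :
    dLap M h v p =
      (v (p.1 + 1, p.2) + v (p.1 - 1, p.2) + v (p.1, p.2 + 1) + v (p.1, p.2 - 1) - 4 * v p) / h ^ 2 :=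
  rfl

lemma lap_Bl (h : ℝ) (v w : GridFun M) :
    Bl M (dLap M h v) w = -((h ^ 2)⁻¹ * Dl M v w) := by
  have : Bl M (dLap M h v) w = (h ^ 2)⁻¹ *
      ∑ p : Fin M × Fin M,
        (v (p.1 + 1, p.2) + v (p.1 - 1, p.2) + v (p.1, p.2 + 1) + v (p.1, p.2 - 1) - 4 * v p) * w p := by
    rw [Finset.mul_sum]
    refine Finset.sum_congr rfl fun p _ => ?_
    rw [dLap_apply]; ring
  rw [this, key_sum]; ring

lemma Lk_apply (h ε κ g0 : ℝ) (v : GridFun M) (p : Fin M × Fin M) :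
    Lkappa M h ε κ g0 v p = κ * g0 * v p - ε ^ 2 * dLap M h v p := by
  simp [Lkappa, ContinuousLinearMap.sub_apply, ContinuousLinearMap.smul_apply,
    ContinuousLinearMap.one_apply, Pi.smul_apply, smul_eq_mul, Pi.sub_apply]

lemma Bl_Lk (h ε κ g0 : ℝ) (v w : GridFun M) :
    Bl M (Lkappa M h ε κ g0 v) w = κ * g0 * Bl M v w + ε ^ 2 * (h ^ 2)⁻¹ * Dl M v w := by
  have : Bl M (Lkappa M h ε κ g0 v) w
      = κ * g0 * Bl M v w - ε ^ 2 * Bl M (dLap M h v) w := by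
    simp only [Bl, Finset.mul_sum, ← Finset.sum_sub_distrib]
    refine Finset.sum_congr rfl fun p _ => ?_
    rw [Lk_apply]; ring
  rw [this, lap_Bl]; ring

lemma Lk_symm (h ε κ g0 : ℝ) (v w : GridFun M) :
    Bl M (Lkappa M h ε κ g0 v) w = Bl M v (Lkappa M h ε κ g0 w) := by
  rw [Bl_symm (M := M) v (Lkappa M h ε κ g0 w)]
  rw [Bl_Lk, Bl_Lk, Bl_symm, Dl_symm]

lemma gradE_eq (h ε : ℝ) (hh : h ≠ 0) (v : GridFun M) :
    gradE M h ε v = ε ^ 2 / 2 * Dl M v v := by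
  unfold gradE Dl
  congr 1
  rw [Finset.mul_sum]
  refine Finset.sum_congr rfl fun p _ => ?_
  field_simp

lemma gradE_nonneg (h ε : ℝ) (v : GridFun M) : 0 ≤ gradE M h ε v := by
  unfold gradE
  positivity

end Stmt6Aux
namespace Stmt6Aux
set_option linter.unusedSectionVars false
set_option maxHeartbeats 1000000
open NormedSpace
variable {M : ℕ} [NeZero M]

lemma mild_energy (A : GridFun M →L[ℝ] GridFun M)
    (hsymm : ∀ v w, Bl M (A v) w = Bl M v (A w))
    (N u0 : GridFun M) (τ : ℝ) (hτ : 0 ≤ τ) :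
    (1/2) * Bl M (A ((exp (-(τ • A))) u0
        + (∫ θ in (0:ℝ)..τ, exp (-((τ - θ) • A))) N))
        ((exp (-(τ • A))) u0 + (∫ θ in (0:ℝ)..τ, exp (-((τ - θ) • A))) N)
      - Bl M N ((exp (-(τ • A))) u0 + (∫ θ in (0:ℝ)..τ, exp (-((τ - θ) • A))) N)
    ≤ (1/2) * Bl M (A u0) u0 - Bl M N u0 := by
  have hc : Continuous (fun s : ℝ => exp (s • (-A))) := (continuous_iff_continuousAt.2 fun x => (exp_analytic (𝕂 := ℝ) x).continuousAt).comp (by continuity)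
  set V : ℝ → (GridFun M →L[ℝ] GridFun M) := fun t => ∫ s in (0:ℝ)..t, exp (s • (-A)) with hVdef
  have hVd : ∀ θ : ℝ, HasDerivAt V (exp (θ • (-A))) θ := fun θ =>
    intervalIntegral.integral_hasDerivAt_right (hc.intervalIntegrable _ _)
      (hc.stronglyMeasurableAtFilter _ _) hc.continuousAt
  have hexp : ∀ θ : ℝ, HasDerivAt (fun t : ℝ => exp (t • (-A))) (exp (θ • (-A)) * (-A)) θ :=
    fun θ => hasDerivAt_exp_smul_const (-A) θ
  have hcomm : ∀ θ : ℝ, exp (θ • (-A)) * A = A * exp (θ • (-A)) := fun θ =>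
    (((Commute.refl A).neg_left.smul_left θ).exp_left).eq
  have hmn : ∀ θ : ℝ, exp (θ • (-A)) * (-A) = -(A * exp (θ • (-A))) := by
    intro θ
    have h3 : exp (θ • (-A)) * (-A) = -(exp (θ • (-A)) * A) := by
      ext x; simp [ContinuousLinearMap.mul_apply]
    rw [h3, hcomm θ]
  have h00 : V 0 = 0 := intervalIntegral.integral_same
  -- A * V θ = 1 - exp (θ • (-A))
  have hAV : ∀ θ : ℝ, A * V θ = 1 - exp (θ • (-A)) := by
    have hW : ∀ θ : ℝ, HasDerivAt (fun t => A * V t + exp (t • (-A))) 0 θ := by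
      intro θ
      have h12 := ((hVd θ).const_mul A).add (hexp θ)
      refine h12.congr_deriv ?_
      rw [hmn θ]
      abel
    have hconst := fun (x : ℝ) => is_const_of_deriv_eq_zero
      (fun y => ((hW y).differentiableAt)) (fun y => (hW y).deriv) x 0
    intro θ
    have := hconst θ
    simp only [h00, mul_zero, zero_add, zero_smul, exp_zero] at this
    rw [← this]; abel
  set U : ℝ → GridFun M := fun t => (exp (t • (-A))) u0 + (V t) N with hUdef
  have hUd : ∀ θ : ℝ, HasDerivAt U (N - A (U θ)) θ := by
    intro θ
    have h1 : HasDerivAt (fun t : ℝ => (exp (t • (-A))) u0)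
        ((exp (θ • (-A)) * (-A)) u0) θ := by
      simpa using (hexp θ).clm_apply (hasDerivAt_const θ u0)
    have h2 : HasDerivAt (fun t : ℝ => (V t) N) ((exp (θ • (-A))) N) θ := by
      simpa using (hVd θ).clm_apply (hasDerivAt_const θ N)
    have h12 := h1.add h2
    refine h12.congr_deriv ?_
    have hA2 : A ((V θ) N) = (A * V θ) N := rfl
    have h3 : (exp (θ • (-A)) * (-A)) u0 = -(A ((exp (θ • (-A))) u0)) := by
      rw [hmn θ]; rfl
    rw [h3]
    have h4 : U θ = (exp (θ • (-A))) u0 + (V θ) N := rfl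
    rw [h4, map_add, hA2, hAV θ]
    simp only [ContinuousLinearMap.sub_apply, ContinuousLinearMap.one_apply]
    abel
  -- the quadratic energy
  set ψ : ℝ → ℝ := fun t => (1/2) * Bl M (A (U t)) (U t) - Bl M N (U t) with hψdef
  have hψd : ∀ θ : ℝ, HasDerivAt ψ
      (-(∑ p : Fin M × Fin M, ((N - A (U θ)) p) ^ 2)) θ := by
    intro θ
    have hu := hUd θ
    have hAu : HasDerivAt (fun t => A (U t)) (A N - A (A (U θ))) θ := by
      simpa using (hasDerivAt_const θ A).clm_apply hu
    have hsum1 : HasDerivAt (fun t => ∑ p : Fin M × Fin M, (A (U t)) p * (U t) p)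
        (∑ p : Fin M × Fin M,
          ((A N - A (A (U θ))) p * (U θ) p + (A (U θ)) p * (N - A (U θ)) p)) θ :=
      HasDerivAt.fun_sum fun p _ => ((hasDerivAt_pi.1 hAu p).mul (hasDerivAt_pi.1 hu p))
    have hsum2 : HasDerivAt (fun t => ∑ p : Fin M × Fin M, N p * (U t) p)
        (∑ p : Fin M × Fin M, N p * (N - A (U θ)) p) θ := by
      refine HasDerivAt.fun_sum fun p _ => ?_
      simpa using (hasDerivAt_const θ (N p)).fun_mul (hasDerivAt_pi.1 hu p)
    have hcomb := (hsum1.const_mul ((1:ℝ)/2)).sub hsum2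
    have hψeq : ψ = fun t => (1:ℝ)/2 * (∑ p : Fin M × Fin M, (A (U t)) p * (U t) p)
        - ∑ p : Fin M × Fin M, N p * (U t) p := by
      funext t; rw [hψdef]; simp only [Bl]
    rw [hψeq]
    refine hcomb.congr_deriv ?_
    -- value equality
    have hs : Bl M (A (N - A (U θ))) (U θ) = Bl M (N - A (U θ)) (A (U θ)) :=
      hsymm (N - A (U θ)) (U θ)
    simp only [Bl, map_sub] at hs
    have hswap : ∑ p : Fin M × Fin M, (N - A (U θ)) p * (A (U θ)) p
        = ∑ p : Fin M × Fin M, (A (U θ)) p * (N - A (U θ)) p :=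
      Finset.sum_congr rfl fun p _ => mul_comm _ _
    have hzero : ∑ p : Fin M × Fin M,
        ((A (U θ)) p * (N - A (U θ)) p - N p * (N - A (U θ)) p + ((N - A (U θ)) p) ^ 2) = 0 := by
      refine Finset.sum_eq_zero fun p _ => ?_
      simp only [Pi.sub_apply]
      ring
    simp only [Finset.sum_add_distrib, Finset.sum_sub_distrib] at *
    linarith [hs, hswap, hzero]
  have hanti : Antitone ψ := by
    refine antitone_of_deriv_nonpos (fun θ => (hψd θ).differentiableAt) fun θ => ?_
    rw [(hψd θ).deriv]
    simp only [neg_nonpos]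
    exact Finset.sum_nonneg fun p _ => sq_nonneg _
  have hle : ψ τ ≤ ψ 0 := hanti hτ
  -- identify U 0 and U τ
  have hU0 : U 0 = u0 := by
    have h4 : U 0 = (exp ((0:ℝ) • (-A))) u0 + (V 0) N := rfl
    rw [h4, h00]
    simp [zero_smul, exp_zero]
  have hUτ : U τ = (exp (-(τ • A))) u0 + (∫ θ in (0:ℝ)..τ, exp (-((τ - θ) • A))) N := by
    have hint : (∫ θ in (0:ℝ)..τ, exp (-((τ - θ) • A))) = V τ := by
      have h1 : (fun θ : ℝ => exp (-((τ - θ) • A))) = fun θ : ℝ => exp ((τ - θ) • (-A)) := by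
        funext θ; rw [smul_neg]
      have h2 := intervalIntegral.integral_comp_sub_left (a := (0:ℝ)) (b := τ)
        (fun s : ℝ => exp (s • (-A))) τ
      simp only [sub_self, sub_zero] at h2
      rw [hVdef]
      calc (∫ θ in (0:ℝ)..τ, exp (-((τ - θ) • A)))
          = ∫ θ in (0:ℝ)..τ, exp ((τ - θ) • (-A)) := by rw [h1]
        _ = ∫ s in (0:ℝ)..τ, exp (s • (-A)) := h2
    rw [hint]
    have h5 : -(τ • A) = τ • (-A) := (smul_neg τ A).symm
    rw [h5]
  rw [hψdef] at hle
  simp only at hle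
  rw [hU0, hUτ] at hle
  exact hle

end Stmt6Aux
namespace Stmt6Aux
set_option linter.unusedSectionVars false
set_option maxHeartbeats 1000000
open NormedSpace
variable {M : ℕ} [NeZero M]

lemma step_energy (h ε κ τ : ℝ) (f F σ : ℝ → ℝ) (hh : h ≠ 0) (hκ : 0 < κ) (hτ : 0 ≤ τ)
    (hσpos : ∀ x, 0 < σ x) (us : GridFun M × ℝ) :
    gradE M h ε (EI1step M h ε κ τ f F σ us).1 + (EI1step M h ε κ τ f F σ us).2
      ≤ gradE M h ε us.1 + us.2 := by
  obtain ⟨u0, s0⟩ := us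
  dsimp only
  have hstep1 : (EI1step M h ε κ τ f F σ (u0, s0)).1
      = (exp (-(τ • Lkappa M h ε κ (gFun M h F σ u0 s0)))) u0
        + (∫ θ in (0:ℝ)..τ, exp (-((τ - θ) • Lkappa M h ε κ (gFun M h F σ u0 s0))))
            (Nkappa M h κ (gFun M h F σ u0 s0) f F σ u0 s0) := rfl
  have hstep2 : (EI1step M h ε κ τ f F σ (u0, s0)).2
      = s0 - (gFun M h F σ u0 s0) * gridInner M h (fun p => f (u0 p))
          ((EI1step M h ε κ τ f F σ (u0, s0)).1 - u0) := rfl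
  set G := gFun M h F σ u0 s0 with hGdef
  have hG : 0 < G := div_pos (hσpos _) (hσpos _)
  set u1 := (EI1step M h ε κ τ f F σ (u0, s0)).1 with hu1def
  have key := mild_energy (Lkappa M h ε κ G)
    (fun v w => Lk_symm h ε κ G v w) (Nkappa M h κ G f F σ u0 s0) u0 τ hτ
  rw [← hstep1] at key
  rw [Bl_Lk, Bl_Lk] at key
  set N := Nkappa M h κ G f F σ u0 s0 with hNdef
  -- algebraic identities
  have hQδ : 0 ≤ Bl M (u1 - u0) (u1 - u0) := by
    refine Finset.sum_nonneg fun p _ => ?_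
    simp only [Pi.sub_apply]
    exact mul_self_nonneg _
  have hQ : Bl M u1 u1 - Bl M u0 u0
      = 2 * Bl M u0 (u1 - u0) + Bl M (u1 - u0) (u1 - u0) := by
    simp only [Bl, ← Finset.sum_sub_distrib, Finset.mul_sum, ← Finset.sum_add_distrib]
    exact Finset.sum_congr rfl fun p _ => by simp only [Pi.sub_apply]; ring
  have hBN : Bl M N u1 - Bl M N u0
      = G * Bl M (fun p => f (u0 p)) (u1 - u0) + κ * G * Bl M u0 (u1 - u0) := by
    simp only [Bl, hNdef, Nkappa, ← Finset.sum_sub_distrib, Finset.mul_sum,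
      ← Finset.sum_add_distrib, ← hGdef]
    exact Finset.sum_congr rfl fun p _ => by simp only [Pi.sub_apply]; ring
  have hQ' : κ * G * (Bl M u1 u1 - Bl M u0 u0)
      = κ * G * (2 * Bl M u0 (u1 - u0) + Bl M (u1 - u0) (u1 - u0)) := by rw [hQ]
  have e2 : 0 ≤ κ * G * Bl M (u1 - u0) (u1 - u0) :=
    mul_nonneg (mul_nonneg hκ.le hG.le) hQδ
  have e3 : ε ^ 2 * (h ^ 2)⁻¹ * Dl M u1 u1 - ε ^ 2 * (h ^ 2)⁻¹ * Dl M u0 u0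
      ≤ 2 * (G * Bl M (fun p => f (u0 p)) (u1 - u0)) := by
    nlinarith [key, hBN, hQ', e2]
  have hh2 : (0:ℝ) < h ^ 2 / 2 := by positivity
  have e4 := mul_le_mul_of_nonneg_left e3 hh2.le
  have e5 : h ^ 2 / 2 * (ε ^ 2 * (h ^ 2)⁻¹ * Dl M u1 u1 - ε ^ 2 * (h ^ 2)⁻¹ * Dl M u0 u0)
      = ε ^ 2 / 2 * Dl M u1 u1 - ε ^ 2 / 2 * Dl M u0 u0 := by
    field_simp
  have e6 : h ^ 2 / 2 * (2 * (G * Bl M (fun p => f (u0 p)) (u1 - u0)))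
      = G * (h ^ 2 * Bl M (fun p => f (u0 p)) (u1 - u0)) := by ring
  rw [e5, e6] at e4
  have hgi : gridInner M h (fun p => f (u0 p)) (u1 - u0)
      = h ^ 2 * Bl M (fun p => f (u0 p)) (u1 - u0) := rfl
  rw [hstep2, hgi]
  rw [gradE_eq h ε hh u1, gradE_eq h ε hh u0]
  linarith [e4]

end Stmt6Aux
/-- For any `κ > 0`, `τ > 0`, initial grid function, and `n ≥ 0`, the GSAV-EI1 iterates satisfy
`sⁿ ≤ E_h(u_init)`. -/
theorem stmt_6 (M : ℕ) [NeZero M] (L h ε : ℝ) (hL : 0 < L) (hh : h = L / M) (hε : 0 < ε)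
    (f F σ : ℝ → ℝ) (hF : ∀ x, HasDerivAt F (-f x) x)
    (hσ : ContDiff ℝ 1 σ) (hσpos : ∀ x, 0 < σ x) (hσmono : ∀ x, 0 ≤ deriv σ x)
    (κ : ℝ) (hκ : 0 < κ) (hf : ContDiff ℝ 1 f)
    (τ : ℝ) (hτ : 0 < τ) (uinit : GridFun M) :
    ∀ n : ℕ, (EI1 M h ε κ τ f F σ uinit n).2 ≤ Eh M h ε F uinit := by
  intro n
  have hM : (0:ℝ) < (M:ℝ) := by
    have := Nat.pos_of_ne_zero (NeZero.ne M)
    exact_mod_cast this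
  have hhpos : 0 < h := by rw [hh]; positivity
  have hne : h ≠ 0 := ne_of_gt hhpos
  have mono : ∀ m : ℕ,
      gradE M h ε (EI1 M h ε κ τ f F σ uinit m).1 + (EI1 M h ε κ τ f F σ uinit m).2
        ≤ gradE M h ε uinit + E1h M h F uinit := by
    intro m
    induction m with
    | zero => simp [EI1]
    | succ k ih =>
      have hstep := Stmt6Aux.step_energy (M := M) h ε κ τ f F σ hne hκ hτ.le hσpos
        (EI1 M h ε κ τ f F σ uinit k)
      have hrec : EI1 M h ε κ τ f F σ uinit (k + 1)
          = EI1step M h ε κ τ f F σ (EI1 M h ε κ τ f F σ uinit k) := rfl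
      rw [hrec]
      exact le_trans hstep ih
  have h1 := mono n
  have h2 := Stmt6Aux.gradE_nonneg (M := M) h ε (EI1 M h ε κ τ f F σ uinit n).1
  unfold Eh
  linarith
end
end

section
/- (MBP of GSAV-EI1.) Suppose β > 0 satisfies f(β) ≤ 0 ≤ f(−β) and κ ≥ max_{|ξ|≤β} |f'(ξ)|. Then for any time step τ > 0: if ‖u_init‖_∞ ≤ β, then the GSAV-EI1 iterates satisfy ‖uⁿ‖_∞ ≤ β for every n ≥ 0. -/
open scoped BigOperators
noncomputable section

section AuxMBP

open NormedSpace

variable {M : ℕ} [NeZero M]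

/-- Entrywise nonnegativity preservation for operators on grid functions. -/
def NonnegPres (T : GridFun M →L[ℝ] GridFun M) : Prop :=
  ∀ v : GridFun M, (∀ p, 0 ≤ v p) → ∀ p, 0 ≤ T v p

lemma nonnegPres_pow {T : GridFun M →L[ℝ] GridFun M} (hT : NonnegPres T) :
    ∀ n : ℕ, NonnegPres (T ^ n)
  | 0 => by intro v hv p; simpa using hv p
  | n + 1 => by
      intro v hv p
      rw [pow_succ, ContinuousLinearMap.mul_apply]
      exact nonnegPres_pow hT n (T v) (hT v hv) p

lemma exp_apply_tsum (T : GridFun M →L[ℝ] GridFun M) (v : GridFun M) :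
    NormedSpace.exp T v = ∑' n : ℕ, (n.factorial : ℝ)⁻¹ • (T ^ n) v := by
  have hs : Summable fun n : ℕ => (n.factorial : ℝ)⁻¹ • T ^ n :=
    NormedSpace.expSeries_summable' (𝕂 := ℝ) T
  rw [NormedSpace.exp_eq_tsum ℝ]
  have := (ContinuousLinearMap.apply ℝ (GridFun M) v).map_tsum hs
  simpa using this

lemma summable_exp_terms (T : GridFun M →L[ℝ] GridFun M) (v : GridFun M) :
    Summable fun n : ℕ => (n.factorial : ℝ)⁻¹ • (T ^ n) v := by
  have hs : Summable fun n : ℕ => (n.factorial : ℝ)⁻¹ • T ^ n :=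
    NormedSpace.expSeries_summable' (𝕂 := ℝ) T
  have := hs.map (ContinuousLinearMap.apply ℝ (GridFun M) v)
    (ContinuousLinearMap.apply ℝ (GridFun M) v).continuous
  exact this

lemma exp_apply_of_eigen (T : GridFun M →L[ℝ] GridFun M) (v : GridFun M) (μ : ℝ)
    (hT : T v = μ • v) : NormedSpace.exp T v = Real.exp μ • v := by
  have hpow : ∀ n : ℕ, (T ^ n) v = μ ^ n • v := by
    intro n; induction n with
    | zero => simp
    | succ n ih =>
        rw [pow_succ, ContinuousLinearMap.mul_apply, hT, map_smul, ih, smul_smul, pow_succ]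
        ring_nf
  have hs : Summable fun n : ℕ => (n.factorial : ℝ)⁻¹ * μ ^ n := by
    have := NormedSpace.expSeries_summable' (𝕂 := ℝ) (μ : ℝ)
    simpa [smul_eq_mul] using this
  calc NormedSpace.exp T v = ∑' n : ℕ, (n.factorial : ℝ)⁻¹ • (T ^ n) v := exp_apply_tsum T v
    _ = ∑' n : ℕ, ((n.factorial : ℝ)⁻¹ * μ ^ n) • v := by
        refine tsum_congr fun n => ?_
        rw [hpow, smul_smul]
    _ = (∑' n : ℕ, (n.factorial : ℝ)⁻¹ * μ ^ n) • v := hs.tsum_smul_const v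
    _ = Real.exp μ • v := by
        congr 1
        rw [Real.exp_eq_exp_ℝ, NormedSpace.exp_eq_tsum ℝ]
        simp [smul_eq_mul]

lemma exp_nonnegPres {S : GridFun M →L[ℝ] GridFun M} (hS : NonnegPres S) :
    NonnegPres (NormedSpace.exp S) := by
  intro v hv p
  rw [exp_apply_tsum, tsum_apply (summable_exp_terms S v)]
  refine tsum_nonneg fun n => ?_
  have : ((n.factorial : ℝ)⁻¹ • (S ^ n) v) p = (n.factorial : ℝ)⁻¹ * ((S ^ n) v) p := rfl
  rw [this]
  exact mul_nonneg (inv_nonneg.2 (Nat.cast_nonneg _)) (nonnegPres_pow hS n v hv p)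

/-- The neighbor-sum operator. -/
def shiftA_s7 (M : ℕ) [NeZero M] : GridFun M →L[ℝ] GridFun M :=
  LinearMap.toContinuousLinearMap
    { toFun := fun v p => v (p.1 + 1, p.2) + v (p.1 - 1, p.2) + v (p.1, p.2 + 1) + v (p.1, p.2 - 1)
      map_add' := fun v w => by funext p; simp only [Pi.add_apply]; ring
      map_smul' := fun c v => by
        funext p; simp only [Pi.smul_apply, smul_eq_mul, RingHom.id_apply]; ring }

lemma shiftA_apply (v : GridFun M) (p : Fin M × Fin M) :
    shiftA_s7 M v p
      = v (p.1 + 1, p.2) + v (p.1 - 1, p.2) + v (p.1, p.2 + 1) + v (p.1, p.2 - 1) := rfl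

lemma shiftA_nonnegPres : NonnegPres (shiftA_s7 M) := by
  intro v hv p
  rw [shiftA_apply]
  have h1 := hv (p.1 + 1, p.2); have h2 := hv (p.1 - 1, p.2)
  have h3 := hv (p.1, p.2 + 1); have h4 := hv (p.1, p.2 - 1)
  linarith

lemma negSmul_Lkappa (h ε κ g0 r : ℝ) (hh : h ≠ 0) :
    -(r • Lkappa M h ε κ g0)
      = (r * ε ^ 2 / h ^ 2) • shiftA_s7 M
        - (r * (κ * g0) + 4 * (r * ε ^ 2 / h ^ 2)) • (1 : GridFun M →L[ℝ] GridFun M) := by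
  ext v p
  simp only [ContinuousLinearMap.neg_apply, ContinuousLinearMap.smul_apply,
    ContinuousLinearMap.sub_apply, ContinuousLinearMap.one_apply, Lkappa,
    dLap, LinearMap.coe_toContinuousLinearMap', dLapL, LinearMap.coe_mk, AddHom.coe_mk,
    shiftA_s7, Pi.smul_apply, Pi.sub_apply, Pi.neg_apply, smul_eq_mul]
  have hh2 : h ^ 2 ≠ 0 := pow_ne_zero 2 hh
  field_simp
  ring

lemma exp_negSmul_Lkappa_nonnegPres (h ε κ g0 : ℝ) (hh : h ≠ 0) {r : ℝ} (hr : 0 ≤ r) :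
    NonnegPres (NormedSpace.exp (-(r • Lkappa M h ε κ g0))) := by
  intro v hv p
  set q : ℝ := r * ε ^ 2 / h ^ 2 with hq
  have hq0 : 0 ≤ q := by positivity
  set c : ℝ := r * (κ * g0) + 4 * q with hc
  have hdec : -(r • Lkappa M h ε κ g0)
      = q • shiftA_s7 M + (-(c • (1 : GridFun M →L[ℝ] GridFun M))) := by
    rw [negSmul_Lkappa (M := M) h ε κ g0 r hh, sub_eq_add_neg]
  have hcomm : Commute (q • shiftA_s7 M) (-(c • (1 : GridFun M →L[ℝ] GridFun M))) :=
    ((Commute.one_right (q • shiftA_s7 M)).smul_right c).neg_right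
  let +nondep : NormedAlgebra ℚ (GridFun M →L[ℝ] GridFun M) := .restrictScalars ℚ ℝ _
  rw [hdec, NormedSpace.exp_add_of_commute hcomm, ContinuousLinearMap.mul_apply]
  have heig : (-(c • (1 : GridFun M →L[ℝ] GridFun M))) v = (-c) • v := by
    simp [neg_smul]
  rw [exp_apply_of_eigen _ v (-c) heig]
  have hSnn : NonnegPres (q • shiftA_s7 M) := by
    intro w hw p'
    have : (q • shiftA_s7 M) w p' = q * shiftA_s7 M w p' := rfl
    rw [this]
    exact mul_nonneg hq0 (shiftA_nonnegPres w hw p')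
  exact exp_nonnegPres hSnn _ (fun p' => by
    have : (Real.exp (-c) • v) p' = Real.exp (-c) * v p' := rfl
    rw [this]
    exact mul_nonneg (Real.exp_nonneg _) (hv p')) p

lemma negSmul_Lkappa_const (h ε κ g0 r c : ℝ) (hh : h ≠ 0) :
    (-(r • Lkappa M h ε κ g0)) (fun _ => c) = (-(r * (κ * g0))) • (fun _ => c : GridFun M) := by
  funext p
  simp only [ContinuousLinearMap.neg_apply, ContinuousLinearMap.smul_apply, Lkappa,
    ContinuousLinearMap.sub_apply, ContinuousLinearMap.one_apply,
    dLap, LinearMap.coe_toContinuousLinearMap', dLapL, LinearMap.coe_mk, AddHom.coe_mk,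
    Pi.smul_apply, Pi.sub_apply, Pi.neg_apply, smul_eq_mul]
  have : (c + c + c + c - 4 * c) / h ^ 2 = 0 := by ring
  rw [this]; ring

lemma exp_negSmul_Lkappa_const (h ε κ g0 r c : ℝ) (hh : h ≠ 0) :
    NormedSpace.exp (-(r • Lkappa M h ε κ g0)) (fun _ => c)
      = Real.exp (-(r * (κ * g0))) • (fun _ => c : GridFun M) :=
  exp_apply_of_eigen _ _ _ (negSmul_Lkappa_const h ε κ g0 r c hh)

lemma exp_path_continuous (h ε κ g0 τ : ℝ) :
    Continuous fun θ : ℝ => NormedSpace.exp (-((τ - θ) • Lkappa M h ε κ g0)) := by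
  let +nondep : NormedAlgebra ℚ (GridFun M →L[ℝ] GridFun M) := .restrictScalars ℚ ℝ _
  apply NormedSpace.exp_continuous.comp
  exact ((continuous_const.sub continuous_id).smul continuous_const).neg

lemma exp_path_intervalIntegrable (h ε κ g0 τ : ℝ) :
    IntervalIntegrable (fun θ : ℝ => NormedSpace.exp (-((τ - θ) • Lkappa M h ε κ g0)))
      MeasureTheory.volume 0 τ :=
  (exp_path_continuous h ε κ g0 τ).intervalIntegrable 0 τ

/-- Pointwise formula for the integrated operator applied to a vector. -/
lemma Phi_apply_pt (h ε κ g0 τ : ℝ) (w : GridFun M) (p : Fin M × Fin M) :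
    ((∫ θ in (0:ℝ)..τ, NormedSpace.exp (-((τ - θ) • Lkappa M h ε κ g0))) w) p
      = ∫ θ in (0:ℝ)..τ, (NormedSpace.exp (-((τ - θ) • Lkappa M h ε κ g0)) w) p := by
  rw [ContinuousLinearMap.intervalIntegral_apply (exp_path_intervalIntegrable h ε κ g0 τ) w]
  have hcont : Continuous fun θ : ℝ =>
      NormedSpace.exp (-((τ - θ) • Lkappa M h ε κ g0)) w := by
    exact ((ContinuousLinearMap.apply ℝ (GridFun M) w).continuous).comp
      (exp_path_continuous h ε κ g0 τ)
  have := (ContinuousLinearMap.proj (R := ℝ) (φ := fun _ : Fin M × Fin M => ℝ)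
      p).intervalIntegral_comp_comm (hcont.intervalIntegrable (μ := MeasureTheory.volume) 0 τ)
  exact this.symm

lemma Phi_nonneg (h ε κ g0 τ : ℝ) (hh : h ≠ 0) (hτ : 0 ≤ τ) (w : GridFun M)
    (hw : ∀ p, 0 ≤ w p) (p : Fin M × Fin M) :
    0 ≤ ((∫ θ in (0:ℝ)..τ, NormedSpace.exp (-((τ - θ) • Lkappa M h ε κ g0))) w) p := by
  rw [Phi_apply_pt]
  refine intervalIntegral.integral_nonneg hτ fun θ hθ => ?_
  exact exp_negSmul_Lkappa_nonnegPres h ε κ g0 hh (by linarith [hθ.2] : (0:ℝ) ≤ τ - θ) w hw p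

lemma scalar_int (a τ : ℝ) (ha : a ≠ 0) :
    (∫ θ in (0:ℝ)..τ, Real.exp (-((τ - θ) * a))) = (1 - Real.exp (-(τ * a))) / a := by
  have hderiv : ∀ θ ∈ Set.uIcc (0:ℝ) τ,
      HasDerivAt (fun θ : ℝ => Real.exp (-((τ - θ) * a)) / a) (Real.exp (-((τ - θ) * a))) θ := by
    intro θ _
    have h1 : HasDerivAt (fun θ : ℝ => -((τ - θ) * a)) a θ := by
      have : HasDerivAt (fun θ : ℝ => τ - θ) (-1) θ :=
        (hasDerivAt_id θ).const_sub τ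
      have h := (this.mul_const a).neg
      simp only [neg_mul, one_mul, neg_neg] at h
      exact h
    have h2 := (Real.hasDerivAt_exp (-((τ - θ) * a))).comp θ h1
    have h3 := h2.div_const a
    rw [mul_div_cancel_right₀ _ ha] at h3
    exact h3
  have hcont : IntervalIntegrable (fun θ : ℝ => Real.exp (-((τ - θ) * a)))
      MeasureTheory.volume 0 τ := by
    apply Continuous.intervalIntegrable
    exact Real.continuous_exp.comp (((continuous_const.sub continuous_id).mul
      continuous_const).neg)
  have := intervalIntegral.integral_eq_sub_of_hasDerivAt hderiv hcont
  rw [this]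
  simp only [sub_self, zero_mul, neg_zero, Real.exp_zero, sub_zero]
  ring

lemma Phi_const (h ε κ g0 τ c : ℝ) (hh : h ≠ 0) (ha : κ * g0 ≠ 0) :
    ((∫ θ in (0:ℝ)..τ, NormedSpace.exp (-((τ - θ) • Lkappa M h ε κ g0)))
        (fun _ => c : GridFun M))
      = ((1 - Real.exp (-(τ * (κ * g0)))) / (κ * g0) * c) • (fun _ => (1:ℝ) : GridFun M) := by
  rw [ContinuousLinearMap.intervalIntegral_apply (exp_path_intervalIntegrable h ε κ g0 τ)]
  have hcongr : ∀ θ : ℝ, NormedSpace.exp (-((τ - θ) • Lkappa M h ε κ g0))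
      (fun _ => c : GridFun M) = Real.exp (-((τ - θ) * (κ * g0))) • (fun _ => c : GridFun M) :=
    fun θ => exp_negSmul_Lkappa_const h ε κ g0 (τ - θ) c hh
  rw [intervalIntegral.integral_congr (g := fun θ =>
      Real.exp (-((τ - θ) * (κ * g0))) • (fun _ => c : GridFun M)) (fun θ _ => hcongr θ)]
  rw [intervalIntegral.integral_smul_const, scalar_int _ _ ha]
  funext p
  simp [Pi.smul_apply, smul_eq_mul]

/-- Single-step maximum bound principle. -/
lemma EI1step_mbp (h ε κ τ : ℝ) (hh : h ≠ 0) (hκ : 0 < κ) (hτ : 0 ≤ τ)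
    (f F σ : ℝ → ℝ) (hσpos : ∀ x, 0 < σ x) (β : ℝ)
    (hfb : ∀ ξ : ℝ, |ξ| ≤ β → |f ξ + κ * ξ| ≤ κ * β)
    (us : GridFun M × ℝ) (hu : ∀ p, |us.1 p| ≤ β) :
    ∀ p, |(EI1step M h ε κ τ f F σ us).1 p| ≤ β := by
  intro p
  set g0 : ℝ := gFun M h F σ us.1 us.2 with hg0def
  have hg0 : 0 < g0 := div_pos (hσpos _) (hσpos _)
  have ha : 0 < κ * g0 := mul_pos hκ hg0
  set a : ℝ := κ * g0 with hadef
  set Lk : GridFun M →L[ℝ] GridFun M := Lkappa M h ε κ g0 with hLk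
  set E : GridFun M →L[ℝ] GridFun M := NormedSpace.exp (-(τ • Lk)) with hE
  set Φ : GridFun M →L[ℝ] GridFun M :=
    ∫ θ in (0:ℝ)..τ, NormedSpace.exp (-((τ - θ) • Lk)) with hΦ
  set N : GridFun M := Nkappa M h κ g0 f F σ us.1 us.2 with hN
  have hstep : (EI1step M h ε κ τ f F σ us).1 = E us.1 + Φ N := rfl
  -- values on constants
  have hEc : ∀ c : ℝ, E (fun _ => c) p = Real.exp (-(τ * a)) * c := by
    intro c
    have := exp_negSmul_Lkappa_const (M := M) h ε κ g0 τ c hh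
    rw [hE, hLk, this]
    rfl
  have hΦc : ∀ c : ℝ, Φ (fun _ => c) p = (1 - Real.exp (-(τ * a))) / a * c := by
    intro c
    have := Phi_const (M := M) h ε κ g0 τ c hh ha.ne'
    rw [hΦ, hLk, this]
    simp [Pi.smul_apply, smul_eq_mul, hadef]
  -- N bounded by a * β entrywise
  have hNbound : ∀ q, |N q| ≤ a * β := by
    intro q
    have hNq : N q = g0 * (f (us.1 q) + κ * us.1 q) := by
      simp only [hN, Nkappa, ← hg0def]; ring
    rw [hNq, abs_mul, abs_of_pos hg0]
    calc g0 * |f (us.1 q) + κ * us.1 q| ≤ g0 * (κ * β) :=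
          mul_le_mul_of_nonneg_left (hfb _ (hu q)) hg0.le
      _ = a * β := by ring
  -- positivity facts
  have hEpos : ∀ w : GridFun M, (∀ q, 0 ≤ w q) → ∀ q, 0 ≤ E w q := by
    intro w hw q
    exact exp_negSmul_Lkappa_nonnegPres h ε κ g0 hh hτ w hw q
  have hΦpos : ∀ w : GridFun M, (∀ q, 0 ≤ w q) → ∀ q, 0 ≤ Φ w q := by
    intro w hw q
    exact Phi_nonneg h ε κ g0 τ hh hτ w hw q
  -- scalar identity
  have hid : Real.exp (-(τ * a)) * β + (1 - Real.exp (-(τ * a))) / a * (a * β) = β := by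
    field_simp
    ring
  -- upper bound
  have hup : (E us.1 + Φ N) p ≤ β := by
    have h1 : 0 ≤ E ((fun _ => β) - us.1) p := by
      refine hEpos _ (fun q => ?_) p
      have hq := hu q; rw [abs_le] at hq
      simp only [Pi.sub_apply]; linarith [hq.2]
    have h2 : 0 ≤ Φ ((fun _ => a * β) - N) p := by
      refine hΦpos _ (fun q => ?_) p
      have hq := hNbound q; rw [abs_le] at hq
      simp only [Pi.sub_apply]; linarith [hq.2]
    have e1 : E ((fun _ => β) - us.1) p = E (fun _ => β) p - E us.1 p := by
      rw [map_sub]; rfl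
    have e2 : Φ ((fun _ => a * β) - N) p = Φ (fun _ => a * β) p - Φ N p := by
      rw [map_sub]; rfl
    rw [e1, hEc] at h1
    rw [e2, hΦc] at h2
    have : (E us.1 + Φ N) p = E us.1 p + Φ N p := rfl
    rw [this]
    linarith
  -- lower bound
  have hlo : -β ≤ (E us.1 + Φ N) p := by
    have h1 : 0 ≤ E (us.1 + (fun _ => β)) p := by
      refine hEpos _ (fun q => ?_) p
      have hq := hu q; rw [abs_le] at hq
      simp only [Pi.add_apply]; linarith [hq.1]
    have h2 : 0 ≤ Φ (N + (fun _ => a * β)) p := by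
      refine hΦpos _ (fun q => ?_) p
      have hq := hNbound q; rw [abs_le] at hq
      simp only [Pi.add_apply]; linarith [hq.1]
    have e1 : E (us.1 + (fun _ => β)) p = E us.1 p + E (fun _ => β) p := by
      rw [map_add]; rfl
    have e2 : Φ (N + (fun _ => a * β)) p = Φ N p + Φ (fun _ => a * β) p := by
      rw [map_add]; rfl
    rw [e1, hEc] at h1
    rw [e2, hΦc] at h2
    have : (E us.1 + Φ N) p = E us.1 p + Φ N p := rfl
    rw [this]
    linarith
  rw [hstep, abs_le]
  exact ⟨hlo, hup⟩

lemma fplus_bound (f : ℝ → ℝ) (hf : ContDiff ℝ 1 f) (κ β : ℝ) (hβ : 0 < β)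
    (hfβ : f β ≤ 0) (hfβ' : 0 ≤ f (-β)) (hκf : ∀ ξ ∈ Set.Icc (-β) β, |deriv f ξ| ≤ κ) :
    ∀ ξ : ℝ, |ξ| ≤ β → |f ξ + κ * ξ| ≤ κ * β := by
  have hdiff : Differentiable ℝ f := hf.differentiable one_ne_zero
  have hmono : MonotoneOn (fun x => f x + κ * x) (Set.Icc (-β) β) := by
    apply monotoneOn_of_deriv_nonneg (convex_Icc _ _)
    · exact (hf.continuous.add (continuous_const.mul continuous_id)).continuousOn
    · exact ((hdiff.add
        (differentiable_const κ |>.mul differentiable_id)).differentiableOn)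
    · intro x hx
      rw [interior_Icc] at hx
      have hd : deriv (fun x => f x + κ * x) x = deriv f x + κ := by
        have h1 : HasDerivAt (fun x => f x + κ * x) (deriv f x + κ * 1) x :=
          ((hdiff x).hasDerivAt).add ((hasDerivAt_id x).const_mul κ)
        rw [mul_one] at h1
        exact h1.deriv
      rw [hd]
      have := hκf x (Set.mem_Icc.2 ⟨hx.1.le, hx.2.le⟩)
      rw [abs_le] at this
      linarith [this.1]
  intro ξ hξ
  rw [abs_le] at hξ
  have hmem : ξ ∈ Set.Icc (-β) β := Set.mem_Icc.2 ⟨hξ.1, hξ.2⟩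
  have hlow := hmono (Set.mem_Icc.2 ⟨le_refl (-β), by linarith⟩) hmem hξ.1
  have hhigh := hmono hmem (Set.mem_Icc.2 ⟨by linarith, le_refl β⟩) hξ.2
  simp only at hlow hhigh
  rw [abs_le]
  constructor <;> nlinarith

end AuxMBP

/-- MBP of GSAV-EI1: if `f(β) ≤ 0 ≤ f(−β)` and `κ ≥ max_{|ξ|≤β} |f'(ξ)|`, then for any `τ > 0`,
 `‖u_init‖_∞ ≤ β` implies `‖uⁿ‖_∞ ≤ β` for every `n ≥ 0` (here `‖·‖` is the sup norm). -/
theorem stmt_7 (M : ℕ) [NeZero M] (L h ε : ℝ) (hL : 0 < L) (hh : h = L / M) (hε : 0 < ε)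
    (f F σ : ℝ → ℝ) (hF : ∀ x, HasDerivAt F (-f x) x)
    (hσ : ContDiff ℝ 1 σ) (hσpos : ∀ x, 0 < σ x) (hσmono : ∀ x, 0 ≤ deriv σ x)
    (κ : ℝ) (hκ : 0 < κ) (hf : ContDiff ℝ 1 f)
    (β : ℝ) (hβ : 0 < β) (hfβ : f β ≤ 0) (hfβ' : 0 ≤ f (-β))
    (hκf : ∀ ξ ∈ Set.Icc (-β) β, |deriv f ξ| ≤ κ)
    (τ : ℝ) (hτ : 0 < τ) (uinit : GridFun M) (hinit : ‖uinit‖ ≤ β) :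
    ∀ n : ℕ, ‖(EI1 M h ε κ τ f F σ uinit n).1‖ ≤ β := by
  have hM : (0:ℝ) < (M:ℝ) := by
    exact_mod_cast Nat.pos_of_ne_zero (NeZero.ne M)
  have hhpos : 0 < h := by rw [hh]; positivity
  have hfb := fplus_bound f hf κ β hβ hfβ hfβ' hκf
  have key : ∀ n : ℕ, ∀ p, |(EI1 M h ε κ τ f F σ uinit n).1 p| ≤ β := by
    intro n
    induction n with
    | zero =>
        intro p
        have := (pi_norm_le_iff_of_nonneg hβ.le).1 hinit p
        simpa [Real.norm_eq_abs, EI1] using this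
    | succ n ih =>
        have := EI1step_mbp h ε κ τ hhpos.ne' hκ hτ.le f F σ hσpos β hfb
          (EI1 M h ε κ τ f F σ uinit n) ih
        simpa [EI1] using this
  intro n
  rw [pi_norm_le_iff_of_nonneg hβ.le]
  intro p
  simpa [Real.norm_eq_abs] using key n p
end
end

section
/- Fix the spatial mesh size h and a final time T > 0. Suppose β > 0 satisfies f(β) ≤ 0 ≤ f(−β), κ ≥ max_{|ξ|≤β} |f'(ξ)|, and ‖u_init‖_∞ ≤ β. Then there exist constants G_* > 0 and G^* > 0, independent of the time step τ, such that for every τ > 0 and every integer n with 0 ≤ n ≤ ⌊T/τ⌋, the GSAV-EI1 iterates satisfy G_* ≤ g(uⁿ, sⁿ) ≤ G^*. -/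
open scoped BigOperators
noncomputable section

set_option linter.unusedSectionVars false
namespace Aux

variable {M : ℕ} [NeZero M]

/-- unweighted dot product -/
def dot (v w : GridFun M) : ℝ := ∑ p : Fin M × Fin M, v p * w p

lemma dot_comm (v w : GridFun M) : dot v w = dot w v := by
  unfold dot; exact Finset.sum_congr rfl fun p _ => mul_comm _ _

lemma dot_add_left (u v w : GridFun M) : dot (u + v) w = dot u w + dot v w := by
  unfold dot; rw [← Finset.sum_add_distrib]
  exact Finset.sum_congr rfl fun p _ => by simp [Pi.add_apply]; ring

lemma dot_sub_left (u v w : GridFun M) : dot (u - v) w = dot u w - dot v w := by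
  unfold dot; rw [← Finset.sum_sub_distrib]
  exact Finset.sum_congr rfl fun p _ => by simp [Pi.sub_apply]; ring

lemma dot_smul_left (c : ℝ) (v w : GridFun M) : dot (c • v) w = c * dot v w := by
  unfold dot; rw [Finset.mul_sum]
  exact Finset.sum_congr rfl fun p _ => by simp [Pi.smul_apply]; ring

lemma dot_self_nonneg (v : GridFun M) : 0 ≤ dot v v :=
  Finset.sum_nonneg fun p _ => mul_self_nonneg _

lemma sum_shift1 (φ : Fin M × Fin M → ℝ) :
    ∑ p : Fin M × Fin M, φ (p.1 + 1, p.2) = ∑ p : Fin M × Fin M, φ p := by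
  exact Fintype.sum_equiv ((Equiv.addRight (1 : Fin M)).prodCongr (Equiv.refl _)) _ _
    (fun p => rfl)

lemma sum_shift2 (φ : Fin M × Fin M → ℝ) :
    ∑ p : Fin M × Fin M, φ (p.1, p.2 + 1) = ∑ p : Fin M × Fin M, φ p := by
  exact Fintype.sum_equiv ((Equiv.refl _).prodCongr (Equiv.addRight (1 : Fin M))) _ _
    (fun p => rfl)

lemma sum_mul_comm (a b : GridFun M) (q : Fin M × Fin M → Fin M × Fin M) :
    ∑ x : Fin M × Fin M, a x * b (q x) = ∑ x : Fin M × Fin M, b (q x) * a x :=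
  Finset.sum_congr rfl fun p _ => mul_comm _ _

lemma dot_shift1 (v w : GridFun M) :
    ∑ p : Fin M × Fin M, v (p.1 + 1, p.2) * w p
      = ∑ p : Fin M × Fin M, v p * w (p.1 - 1, p.2) := by
  apply Fintype.sum_equiv ((Equiv.addRight (1 : Fin M)).prodCongr (Equiv.refl _))
  intro p
  simp [Prod.map, add_sub_cancel_right]

lemma dot_shift1' (v w : GridFun M) :
    ∑ p : Fin M × Fin M, v (p.1 - 1, p.2) * w p
      = ∑ p : Fin M × Fin M, v p * w (p.1 + 1, p.2) := by
  apply Fintype.sum_equiv ((Equiv.subRight (1 : Fin M)).prodCongr (Equiv.refl _))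
  intro p
  simp [Prod.map, Equiv.subRight_apply, sub_add_cancel]

lemma dot_shift2 (v w : GridFun M) :
    ∑ p : Fin M × Fin M, v (p.1, p.2 + 1) * w p
      = ∑ p : Fin M × Fin M, v p * w (p.1, p.2 - 1) := by
  apply Fintype.sum_equiv ((Equiv.refl _).prodCongr (Equiv.addRight (1 : Fin M)))
  intro p
  simp [Prod.map, add_sub_cancel_right]

lemma dot_shift2' (v w : GridFun M) :
    ∑ p : Fin M × Fin M, v (p.1, p.2 - 1) * w p
      = ∑ p : Fin M × Fin M, v p * w (p.1, p.2 + 1) := by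
  apply Fintype.sum_equiv ((Equiv.refl _).prodCongr (Equiv.subRight (1 : Fin M)))
  intro p
  simp [Prod.map, Equiv.subRight_apply, sub_add_cancel]

variable {h : ℝ}

lemma dLap_apply (v : GridFun M) (p : Fin M × Fin M) :
    dLap M h v p =
      (v (p.1 + 1, p.2) + v (p.1 - 1, p.2) + v (p.1, p.2 + 1) + v (p.1, p.2 - 1) - 4 * v p)
        / h ^ 2 := rfl

lemma dot_dLap (v w : GridFun M) :
    dot (dLap M h v) w =
      ((∑ p : Fin M × Fin M, v (p.1 + 1, p.2) * w p)
        + (∑ p : Fin M × Fin M, v (p.1 - 1, p.2) * w p)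
        + (∑ p : Fin M × Fin M, v (p.1, p.2 + 1) * w p)
        + (∑ p : Fin M × Fin M, v (p.1, p.2 - 1) * w p)
        - 4 * dot v w) / h ^ 2 := by
  unfold dot
  have key : ∀ p : Fin M × Fin M, dLap M h v p * w p =
      (v (p.1 + 1, p.2) * w p + v (p.1 - 1, p.2) * w p + v (p.1, p.2 + 1) * w p
        + v (p.1, p.2 - 1) * w p - 4 * (v p * w p)) / h ^ 2 := by
    intro p; rw [dLap_apply]; ring
  rw [Finset.sum_congr rfl (fun p _ => key p), ← Finset.sum_div]
  congr 1
  rw [Finset.sum_sub_distrib, Finset.sum_add_distrib, Finset.sum_add_distrib,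
    Finset.sum_add_distrib, ← Finset.mul_sum]


lemma dLap_sym (v w : GridFun M) : dot (dLap M h v) w = dot v (dLap M h w) := by
  have h2 : dot v (dLap M h w) = dot (dLap M h w) v := dot_comm _ _
  rw [dot_dLap, h2, dot_dLap, dot_shift1 v w, dot_shift1' v w, dot_shift2 v w, dot_shift2' v w,
    dot_comm v w]
  congr 1
  have mc := fun (a b : GridFun M) q => sum_mul_comm (M := M) a b q
  rw [← mc v w (fun x => (x.1 + 1, x.2)), ← mc v w (fun x => (x.1 - 1, x.2)),
    ← mc v w (fun x => (x.1, x.2 + 1)), ← mc v w (fun x => (x.1, x.2 - 1))]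
  ring

/-- summation by parts: the Dirichlet sum equals `-h² ⟨Δv, v⟩`. -/
lemma dirichlet_eq (hh : h ≠ 0) (v : GridFun M) :
    ∑ p : Fin M × Fin M, ((v (p.1 + 1, p.2) - v p) ^ 2 + (v (p.1, p.2 + 1) - v p) ^ 2)
      = -(h ^ 2 * dot (dLap M h v) v) := by
  rw [dot_dLap]
  have hdiv : h ^ 2 * (((∑ p : Fin M × Fin M, v (p.1 + 1, p.2) * v p)
        + (∑ p : Fin M × Fin M, v (p.1 - 1, p.2) * v p)
        + (∑ p : Fin M × Fin M, v (p.1, p.2 + 1) * v p)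
        + (∑ p : Fin M × Fin M, v (p.1, p.2 - 1) * v p)
        - 4 * dot v v) / h ^ 2)
      = (∑ p : Fin M × Fin M, v (p.1 + 1, p.2) * v p)
        + (∑ p : Fin M × Fin M, v (p.1 - 1, p.2) * v p)
        + (∑ p : Fin M × Fin M, v (p.1, p.2 + 1) * v p)
        + (∑ p : Fin M × Fin M, v (p.1, p.2 - 1) * v p)
        - 4 * dot v v := by field_simp
  rw [hdiv, dot_shift1' v v, dot_shift2' v v,
    sum_mul_comm v v (fun x => (x.1 + 1, x.2)), sum_mul_comm v v (fun x => (x.1, x.2 + 1))]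
  have expand : ∀ p : Fin M × Fin M,
      (v (p.1 + 1, p.2) - v p) ^ 2 + (v (p.1, p.2 + 1) - v p) ^ 2
        = (v (p.1 + 1, p.2) * v (p.1 + 1, p.2) + v (p.1, p.2 + 1) * v (p.1, p.2 + 1)
            + 2 * (v p * v p))
          - 2 * (v (p.1 + 1, p.2) * v p) - 2 * (v (p.1, p.2 + 1) * v p) := fun p => by ring
  rw [Finset.sum_congr rfl (fun p _ => expand p), Finset.sum_sub_distrib,
    Finset.sum_sub_distrib, Finset.sum_add_distrib, Finset.sum_add_distrib,
    ← Finset.mul_sum, ← Finset.mul_sum, ← Finset.mul_sum,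
    sum_shift1 (M := M) (fun p => v p * v p), sum_shift2 (M := M) (fun p => v p * v p)]
  unfold dot
  ring

lemma gradE_eq (hh : h ≠ 0) (ε : ℝ) (v : GridFun M) :
    gradE M h ε v = -(ε ^ 2 / 2 * (h ^ 2 * dot (dLap M h v) v)) := by
  unfold gradE
  have key : h ^ 2 * ∑ p : Fin M × Fin M,
      (((v (p.1 + 1, p.2) - v p) / h) ^ 2 + ((v (p.1, p.2 + 1) - v p) / h) ^ 2)
      = ∑ p : Fin M × Fin M,
        ((v (p.1 + 1, p.2) - v p) ^ 2 + (v (p.1, p.2 + 1) - v p) ^ 2) := by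
    rw [Finset.mul_sum]
    refine Finset.sum_congr rfl fun p _ => ?_
    field_simp
  rw [key, dirichlet_eq hh]
  ring

lemma gradE_nonneg (ε : ℝ) (v : GridFun M) : 0 ≤ gradE M h ε v := by
  unfold gradE
  have : 0 ≤ ∑ p : Fin M × Fin M,
      (((v (p.1 + 1, p.2) - v p) / h) ^ 2 + ((v (p.1, p.2 + 1) - v p) / h) ^ 2) :=
    Finset.sum_nonneg fun p _ => add_nonneg (sq_nonneg _) (sq_nonneg _)
  positivity


section Op
open NormedSpace

abbrev Op (M : ℕ) : Type := GridFun M →L[ℝ] GridFun M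

instance instNormedAlgebraRatOp : NormedAlgebra ℚ (Op M) := NormedAlgebra.restrictScalars ℚ ℝ (Op M)

/-- symmetric w.r.t. the (unweighted) dot product -/
def IsSym (T : Op M) : Prop := ∀ v w : GridFun M, dot (T v) w = dot v (T w)

/-- positivity preserving (entrywise) -/
def IsPos (T : Op M) : Prop := ∀ v : GridFun M, (∀ p, 0 ≤ v p) → ∀ p, 0 ≤ T v p

/-- `v ↦ dot v w` as a continuous linear map. -/
def dotCLM (w : GridFun M) : GridFun M →L[ℝ] ℝ :=
  LinearMap.toContinuousLinearMap
    { toFun := fun v => dot v w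
      map_add' := fun u v => dot_add_left u v w
      map_smul' := fun c v => by simpa using dot_smul_left c v w }

@[simp] lemma dotCLM_apply (w v : GridFun M) : dotCLM w v = dot v w := rfl

lemma dot_exp_apply (T : Op M) (v w : GridFun M) :
    dot (exp T v) w = ∑' n : ℕ, ((n.factorial : ℝ)⁻¹) * dot ((T ^ n) v) w := by
  have hsum : Summable fun n : ℕ => ((n.factorial : ℝ)⁻¹) • T ^ n :=
    expSeries_summable' (𝕂 := ℝ) T
  have φ : Op M →L[ℝ] ℝ :=
    (dotCLM w).comp ((ContinuousLinearMap.apply ℝ (GridFun M)) v)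
  have hφ := ((dotCLM w).comp ((ContinuousLinearMap.apply ℝ (GridFun M)) v)).map_tsum hsum
  rw [exp_eq_tsum ℝ]
  simpa [ContinuousLinearMap.comp_apply, smul_eq_mul, dot_smul_left] using hφ

lemma eval_exp_apply (T : Op M) (v : GridFun M) (p : Fin M × Fin M) :
    exp T v p = ∑' n : ℕ, ((n.factorial : ℝ)⁻¹) * ((T ^ n) v p) := by
  have hsum : Summable fun n : ℕ => ((n.factorial : ℝ)⁻¹) • T ^ n :=
    expSeries_summable' (𝕂 := ℝ) T
  have hφ := ((ContinuousLinearMap.proj (R := ℝ) (φ := fun _ : Fin M × Fin M => ℝ) p).comp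
    ((ContinuousLinearMap.apply ℝ (GridFun M)) v)).map_tsum hsum
  rw [exp_eq_tsum ℝ]
  simpa [ContinuousLinearMap.comp_apply, smul_eq_mul] using hφ

lemma IsSym.pow {T : Op M} (hT : IsSym T) : ∀ n, IsSym (T ^ n)
  | 0 => by intro v w; simp [IsSym]
  | n + 1 => by
      intro v w
      have h1 : (T ^ (n + 1)) v = (T ^ n) (T v) := by rw [pow_succ]; rfl
      have h2 : T ((T ^ n) w) = (T ^ (n + 1)) w := by rw [pow_succ']; rfl
      rw [h1, IsSym.pow hT n (T v) w, hT v ((T ^ n) w), h2]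

lemma IsSym.exp {T : Op M} (hT : IsSym T) : IsSym (NormedSpace.exp T) := by
  intro v w
  rw [dot_exp_apply, dot_comm v (NormedSpace.exp T w), dot_exp_apply]
  congr 1
  funext n
  rw [(hT.pow n) v w, dot_comm]

lemma IsPos.pow {T : Op M} (hT : IsPos T) : ∀ n, IsPos (T ^ n)
  | 0 => by intro v hv p; simpa using hv p
  | n + 1 => by
      intro v hv p
      have h1 : (T ^ (n + 1)) v = (T ^ n) (T v) := by rw [pow_succ]; rfl
      rw [h1]
      exact (IsPos.pow hT n) (T v) (fun q => hT v hv q) p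

lemma IsPos.exp {T : Op M} (hT : IsPos T) : IsPos (NormedSpace.exp T) := by
  intro v hv p
  rw [eval_exp_apply]
  refine tsum_nonneg fun n => ?_
  exact mul_nonneg (by positivity) ((hT.pow n) v hv p)

/-- action of exp on a constant eigenvector -/
lemma exp_const_apply {T : Op M} {c : ℝ} (hT : T (fun _ => 1) = fun _ => c)
    (p : Fin M × Fin M) : NormedSpace.exp T (fun _ => 1) p = Real.exp c := by
  have hpow : ∀ n, (T ^ n) (fun _ => (1 : ℝ)) = fun _ => c ^ n := by
    intro n
    induction n with
    | zero => simp
    | succ n ih =>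
        have h1 : (T ^ (n + 1)) (fun _ => (1 : ℝ)) = T ((T ^ n) (fun _ => 1)) := by
          rw [pow_succ']; rfl
        rw [h1, ih]
        have hsm : (fun _ : Fin M × Fin M => c ^ n) = c ^ n • (fun _ => (1 : ℝ)) := by
          funext q; simp
        rw [hsm, map_smul, hT]
        funext q; simp [pow_succ, mul_comm]
  rw [eval_exp_apply]
  have hc : ∀ n : ℕ, ((n.factorial : ℝ)⁻¹) * ((T ^ n) (fun _ => (1:ℝ)) p)
      = ((n.factorial : ℝ)⁻¹) • c ^ n := by
    intro n; rw [hpow n]; simp [smul_eq_mul]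
  rw [tsum_congr hc, Real.exp_eq_exp_ℝ, NormedSpace.exp_eq_tsum ℝ]

/-- positive operators with constant row sums bound the sup norm -/
lemma IsPos.norm_bound {T : Op M} {c : ℝ} (hpos : IsPos T)
    (hT : T (fun _ => 1) = fun _ => c) (v : GridFun M) : ‖T v‖ ≤ c * ‖v‖ := by
  have hc : 0 ≤ c := by
    have := hpos (fun _ => 1) (fun _ => zero_le_one) (0, 0)
    rwa [hT] at this
  have habs : ∀ q, |v q| ≤ ‖v‖ := by
    intro q
    have := norm_le_pi_norm v q
    rwa [Real.norm_eq_abs] at this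
  have key : ∀ p, |T v p| ≤ c * ‖v‖ := by
    intro p
    have hup : T v p ≤ c * ‖v‖ := by
      have hnn : ∀ q, 0 ≤ ((‖v‖ • ((fun _ => (1:ℝ)) : GridFun M) - v) q) := by
        intro q
        have := (abs_le.1 (habs q)).2
        simp only [Pi.sub_apply, Pi.smul_apply, smul_eq_mul, mul_one]
        linarith
      have h0 := hpos _ hnn p
      rw [map_sub, map_smul, hT] at h0
      simp only [Pi.sub_apply, Pi.smul_apply, smul_eq_mul] at h0
      linarith [h0]
    have hlo : -(c * ‖v‖) ≤ T v p := by
      have hnn : ∀ q, 0 ≤ ((‖v‖ • ((fun _ => (1:ℝ)) : GridFun M) + v) q) := by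
        intro q
        have := (abs_le.1 (habs q)).1
        simp only [Pi.add_apply, Pi.smul_apply, smul_eq_mul, mul_one]
        linarith
      have h0 := hpos _ hnn p
      rw [map_add, map_smul, hT] at h0
      simp only [Pi.add_apply, Pi.smul_apply, smul_eq_mul] at h0
      linarith [h0]
    rw [abs_le]
    constructor <;> linarith
  refine (pi_norm_le_iff_of_nonneg (mul_nonneg hc (norm_nonneg v))).2 fun p => ?_
  rw [Real.norm_eq_abs]
  exact key p

end Op

section dotmore

lemma dot_add_right (u v w : GridFun M) : dot u (v + w) = dot u v + dot u w := by
  rw [dot_comm, dot_add_left, dot_comm v u, dot_comm w u]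

lemma dot_sub_right (u v w : GridFun M) : dot u (v - w) = dot u v - dot u w := by
  rw [dot_comm, dot_sub_left, dot_comm v u, dot_comm w u]

lemma dot_smul_right (c : ℝ) (v w : GridFun M) : dot v (c • w) = c * dot v w := by
  rw [dot_comm, dot_smul_left, dot_comm w v]

lemma IsSym.smul {T : Op M} (hT : IsSym T) (c : ℝ) : IsSym (c • T) := by
  intro v w
  simp only [ContinuousLinearMap.smul_apply]
  rw [dot_smul_left, dot_smul_right, hT]

lemma IsPos.smul {T : Op M} (hT : IsPos T) {c : ℝ} (hc : 0 ≤ c) : IsPos (c • T) := by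
  intro v hv p
  simp only [ContinuousLinearMap.smul_apply, Pi.smul_apply, smul_eq_mul]
  exact mul_nonneg hc (hT v hv p)

lemma IsSym.exp_dot_nonneg {T : Op M} (hT : IsSym T) (v : GridFun M) :
    0 ≤ dot (NormedSpace.exp T v) v := by
  have h2 : T = (1 / 2 : ℝ) • T + (1 / 2 : ℝ) • T := by
    rw [← add_smul]; norm_num
  have hhalf : IsSym ((1 / 2 : ℝ) • T) := hT.smul _
  have hE : IsSym (NormedSpace.exp ((1 / 2 : ℝ) • T)) := hhalf.exp
  rw [h2, NormedSpace.exp_add_of_commute (Commute.refl _)]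
  have happ : (NormedSpace.exp ((1 / 2 : ℝ) • T) * NormedSpace.exp ((1 / 2 : ℝ) • T)) v
      = NormedSpace.exp ((1 / 2 : ℝ) • T) (NormedSpace.exp ((1 / 2 : ℝ) • T) v) := rfl
  rw [happ, hE]
  exact dot_self_nonneg _

set_option synthInstance.maxHeartbeats 1000000 in
lemma exp_smul_one_add (c : ℝ) (X : Op M) :
    NormedSpace.exp (c • (1 : Op M) + X) = Real.exp c • NormedSpace.exp X := by
  have hcomm : Commute (c • (1 : Op M)) X := (Commute.one_left X).smul_left c
  rw [NormedSpace.exp_add_of_commute hcomm]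
  have h1 : c • (1 : Op M) = algebraMap ℝ (Op M) c := (Algebra.algebraMap_eq_smul_one c).symm
  rw [h1, ← NormedSpace.algebraMap_exp_comm (𝕂 := ℝ) (𝔸 := Op M), ← Real.exp_eq_exp_ℝ,
    Algebra.algebraMap_eq_smul_one, smul_mul_assoc, one_mul]

end dotmore

section LkOps
variable {h ε κ g0 : ℝ}

/-- the nonneg-entry companion of the Laplacian -/
def Bop (M : ℕ) [NeZero M] (h : ℝ) : Op M := dLap M h + (4 / h ^ 2) • (1 : Op M)

lemma Bop_apply (v : GridFun M) (p : Fin M × Fin M) :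
    Bop M h v p = dLap M h v p + 4 / h ^ 2 * v p := rfl

lemma Bop_pos : IsPos (Bop M h) := by
  intro v hv p
  rw [Bop_apply, dLap_apply]
  have key : (v (p.1 + 1, p.2) + v (p.1 - 1, p.2) + v (p.1, p.2 + 1) + v (p.1, p.2 - 1)
      - 4 * v p) / h ^ 2 + 4 / h ^ 2 * v p
      = (v (p.1 + 1, p.2) + v (p.1 - 1, p.2) + v (p.1, p.2 + 1) + v (p.1, p.2 - 1)) / h ^ 2 := by
    ring
  rw [key]
  have hnum : 0 ≤ v (p.1 + 1, p.2) + v (p.1 - 1, p.2) + v (p.1, p.2 + 1) + v (p.1, p.2 - 1) := by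
    have := hv (p.1 + 1, p.2); have := hv (p.1 - 1, p.2)
    have := hv (p.1, p.2 + 1); have := hv (p.1, p.2 - 1)
    linarith
  positivity

lemma Bop_one : Bop M h (fun _ => 1) = fun _ => 4 / h ^ 2 := by
  funext p
  rw [Bop_apply, dLap_apply]
  norm_num

lemma dLap_sym' : IsSym (dLap M h) := fun v w => dLap_sym v w

lemma Lk_apply (v : GridFun M) :
    Lkappa M h ε κ g0 v = (κ * g0) • v - ε ^ 2 • dLap M h v := rfl

lemma Lk_sym : IsSym (Lkappa M h ε κ g0) := by
  intro v w
  rw [Lk_apply, Lk_apply, dot_sub_left, dot_sub_right, dot_smul_left, dot_smul_right,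
    dot_smul_left, dot_smul_right, dLap_sym]

lemma neg_smul_Lk (s : ℝ) :
    -(s • Lkappa M h ε κ g0)
      = (-(s * (κ * g0) + s * ε ^ 2 * (4 / h ^ 2))) • (1 : Op M) + (s * ε ^ 2) • Bop M h := by
  unfold Lkappa Bop
  ext v p
  simp only [ContinuousLinearMap.neg_apply, ContinuousLinearMap.smul_apply,
    ContinuousLinearMap.sub_apply, ContinuousLinearMap.add_apply, ContinuousLinearMap.one_apply,
    Pi.neg_apply, Pi.smul_apply, Pi.sub_apply, Pi.add_apply, smul_eq_mul]
  ring

lemma exp_neg_smul_Lk (s : ℝ) :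
    NormedSpace.exp (-(s • Lkappa M h ε κ g0))
      = Real.exp (-(s * (κ * g0) + s * ε ^ 2 * (4 / h ^ 2)))
          • NormedSpace.exp ((s * ε ^ 2) • Bop M h) := by
  rw [neg_smul_Lk, exp_smul_one_add]

lemma norm_exp_neg_smul_Lk {s : ℝ} (hs : 0 ≤ s) (v : GridFun M) :
    ‖NormedSpace.exp (-(s • Lkappa M h ε κ g0)) v‖
      ≤ Real.exp (-(s * (κ * g0))) * ‖v‖ := by
  rw [exp_neg_smul_Lk]
  have hpos : IsPos ((s * ε ^ 2) • Bop M h) := Bop_pos.smul (by positivity)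
  have hone : ((s * ε ^ 2) • Bop M h) (fun _ => 1) = fun _ => s * ε ^ 2 * (4 / h ^ 2) := by
    funext p
    simp only [ContinuousLinearMap.smul_apply, Pi.smul_apply, smul_eq_mul]
    rw [Bop_one]
  have hrow : NormedSpace.exp ((s * ε ^ 2) • Bop M h) (fun _ => 1)
      = fun _ => Real.exp (s * ε ^ 2 * (4 / h ^ 2)) := by
    funext p; exact exp_const_apply hone p
  have hb := (hpos.exp).norm_bound hrow v
  simp only [ContinuousLinearMap.smul_apply]
  rw [norm_smul, Real.norm_eq_abs, abs_of_pos (Real.exp_pos _)]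
  calc Real.exp (-(s * (κ * g0) + s * ε ^ 2 * (4 / h ^ 2)))
        * ‖NormedSpace.exp ((s * ε ^ 2) • Bop M h) v‖
      ≤ Real.exp (-(s * (κ * g0) + s * ε ^ 2 * (4 / h ^ 2)))
        * (Real.exp (s * ε ^ 2 * (4 / h ^ 2)) * ‖v‖) := by
        exact mul_le_mul_of_nonneg_left hb (le_of_lt (Real.exp_pos _))
    _ = Real.exp (-(s * (κ * g0))) * ‖v‖ := by
        rw [← mul_assoc, ← Real.exp_add]
        ring_nf

end LkOps

section Integral
open intervalIntegral
variable {h ε κ g0 τ : ℝ}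

lemma cont_exp_path : Continuous fun θ : ℝ =>
    NormedSpace.exp (-((τ - θ) • Lkappa M h ε κ g0)) := by
  apply NormedSpace.exp_continuous.comp
  exact ((continuous_const.sub continuous_id).smul continuous_const).neg

lemma intInt_exp_path : IntervalIntegrable
    (fun θ : ℝ => NormedSpace.exp (-((τ - θ) • Lkappa M h ε κ g0))) MeasureTheory.volume 0 τ := by
  exact cont_exp_path.intervalIntegrable 0 τ

lemma Aop_apply (z : GridFun M) :
    (∫ θ in (0:ℝ)..τ, NormedSpace.exp (-((τ - θ) • Lkappa M h ε κ g0))) z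
      = ∫ θ in (0:ℝ)..τ, NormedSpace.exp (-((τ - θ) • Lkappa M h ε κ g0)) z :=
  ContinuousLinearMap.intervalIntegral_apply intInt_exp_path z

lemma cont_exp_path_apply (z : GridFun M) : Continuous fun θ : ℝ =>
    NormedSpace.exp (-((τ - θ) • Lkappa M h ε κ g0)) z := by
  have : Continuous fun S : Op M => S z := (ContinuousLinearMap.apply ℝ (GridFun M) z).continuous
  exact this.comp cont_exp_path

lemma dot_Aop_left (z w : GridFun M) :
    dot ((∫ θ in (0:ℝ)..τ, NormedSpace.exp (-((τ - θ) • Lkappa M h ε κ g0))) z) w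
      = ∫ θ in (0:ℝ)..τ, dot (NormedSpace.exp (-((τ - θ) • Lkappa M h ε κ g0)) z) w := by
  rw [Aop_apply]
  have hs := (dotCLM w).intervalIntegral_comp_comm (μ := MeasureTheory.volume)
    ((cont_exp_path_apply (M := M) (h := h) (ε := ε) (κ := κ) (g0 := g0) (τ := τ)
      z).intervalIntegrable 0 τ)
  simp only [dotCLM_apply] at hs
  exact hs.symm

lemma Aop_sym (z w : GridFun M) :
    dot ((∫ θ in (0:ℝ)..τ, NormedSpace.exp (-((τ - θ) • Lkappa M h ε κ g0))) z) w
      = dot z ((∫ θ in (0:ℝ)..τ, NormedSpace.exp (-((τ - θ) • Lkappa M h ε κ g0))) w) := by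
  rw [dot_Aop_left, dot_comm z _, dot_Aop_left]
  apply intervalIntegral.integral_congr
  intro θ _
  dsimp only
  have hsym : IsSym (NormedSpace.exp (-((τ - θ) • Lkappa M h ε κ g0))) := by
    have : -((τ - θ) • Lkappa M h ε κ g0) = (-(τ - θ)) • Lkappa M h ε κ g0 :=
      (neg_smul _ _).symm
    rw [this]
    exact (Lk_sym.smul _).exp
  rw [hsym z w, dot_comm]

lemma Aop_dot_nonneg (hτ : 0 ≤ τ) (z : GridFun M) :
    0 ≤ dot ((∫ θ in (0:ℝ)..τ, NormedSpace.exp (-((τ - θ) • Lkappa M h ε κ g0))) z) z := by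
  rw [dot_Aop_left]
  apply intervalIntegral.integral_nonneg hτ
  intro θ _
  have : -((τ - θ) • Lkappa M h ε κ g0) = (-(τ - θ)) • Lkappa M h ε κ g0 := (neg_smul _ _).symm
  rw [this]
  exact ((Lk_sym.smul _).exp_dot_nonneg) z

lemma Aop_exp_dot_nonneg (hτ : 0 ≤ τ) (z : GridFun M) :
    0 ≤ dot ((∫ θ in (0:ℝ)..τ, NormedSpace.exp (-((τ - θ) • Lkappa M h ε κ g0)))
          (NormedSpace.exp (-(τ • Lkappa M h ε κ g0)) z)) z := by
  rw [dot_Aop_left]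
  apply intervalIntegral.integral_nonneg hτ
  intro θ _
  have key : NormedSpace.exp (-((τ - θ) • Lkappa M h ε κ g0))
      (NormedSpace.exp (-(τ • Lkappa M h ε κ g0)) z)
      = NormedSpace.exp ((-(τ - θ) + -τ) • Lkappa M h ε κ g0) z := by
    have h1 : -((τ - θ) • Lkappa M h ε κ g0) = (-(τ - θ)) • Lkappa M h ε κ g0 := (neg_smul _ _).symm
    have h2 : -(τ • Lkappa M h ε κ g0) = (-τ) • Lkappa M h ε κ g0 := (neg_smul _ _).symm
    have hcomm : Commute ((-(τ - θ)) • Lkappa M h ε κ g0) ((-τ) • Lkappa M h ε κ g0) :=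
      ((Commute.refl (Lkappa M h ε κ g0)).smul_left _).smul_right _
    rw [h1, h2, add_smul, NormedSpace.exp_add_of_commute hcomm]
    rfl
  rw [key]
  exact ((Lk_sym.smul _).exp_dot_nonneg) z

/-- the homogeneous FTC identity: `A (L z) = z - e^{-τL} z`. -/
lemma Aop_Lk (z : GridFun M) :
    (∫ θ in (0:ℝ)..τ, NormedSpace.exp (-((τ - θ) • Lkappa M h ε κ g0)))
        (Lkappa M h ε κ g0 z)
      = z - NormedSpace.exp (-(τ • Lkappa M h ε κ g0)) z := by
  have hder : ∀ θ : ℝ, HasDerivAt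
      (fun θ : ℝ => NormedSpace.exp (-((τ - θ) • Lkappa M h ε κ g0)) z)
      (NormedSpace.exp (-((τ - θ) • Lkappa M h ε κ g0)) (Lkappa M h ε κ g0 z)) θ := by
    intro θ
    have h0 : ∀ u : ℝ, -((τ - u) • Lkappa M h ε κ g0) = (u - τ) • Lkappa M h ε κ g0 := by
      intro u
      rw [show -((τ - u) • Lkappa M h ε κ g0) = (-(τ - u)) • Lkappa M h ε κ g0 from
        (neg_smul _ _).symm, neg_sub]
    have hbase := hasDerivAt_exp_smul_const (𝕂 := ℝ) (Lkappa M h ε κ g0) (θ - τ)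
    have hshift : HasDerivAt (fun u : ℝ => NormedSpace.exp ((u - τ) • Lkappa M h ε κ g0))
        (NormedSpace.exp ((θ - τ) • Lkappa M h ε κ g0) * Lkappa M h ε κ g0) θ :=
      hbase.comp_sub_const θ τ
    have happ := hshift.clm_apply (hasDerivAt_const θ z)
    simp only [map_zero, add_zero] at happ
    have hfn : (fun u : ℝ => NormedSpace.exp ((u - τ) • Lkappa M h ε κ g0) z)
        = fun u : ℝ => NormedSpace.exp (-((τ - u) • Lkappa M h ε κ g0)) z := by
      funext u; rw [h0]
    rw [hfn] at happ
    have hval : (NormedSpace.exp ((θ - τ) • Lkappa M h ε κ g0) * Lkappa M h ε κ g0) z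
        = NormedSpace.exp (-((τ - θ) • Lkappa M h ε κ g0)) (Lkappa M h ε κ g0 z) := by
      rw [h0]; rfl
    rwa [hval] at happ
  have hcont : Continuous fun θ : ℝ =>
      NormedSpace.exp (-((τ - θ) • Lkappa M h ε κ g0)) (Lkappa M h ε κ g0 z) :=
    cont_exp_path_apply _
  have hFTC := intervalIntegral.integral_eq_sub_of_hasDerivAt
    (f := fun θ : ℝ => NormedSpace.exp (-((τ - θ) • Lkappa M h ε κ g0)) z)
    (fun θ _ => hder θ) (hcont.intervalIntegrable 0 τ)
  rw [ContinuousLinearMap.intervalIntegral_apply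
    ((cont_exp_path (M := M)).intervalIntegrable 0 τ) (Lkappa M h ε κ g0 z)]
  rw [hFTC]
  have e1 : (fun θ : ℝ => NormedSpace.exp (-((τ - θ) • Lkappa M h ε κ g0)) z) τ = z := by
    show NormedSpace.exp (-((τ - τ) • Lkappa M h ε κ g0)) z = z
    rw [sub_self, zero_smul, neg_zero, NormedSpace.exp_zero]
    rfl
  have e2 : (fun θ : ℝ => NormedSpace.exp (-((τ - θ) • Lkappa M h ε κ g0)) z) 0
      = NormedSpace.exp (-(τ • Lkappa M h ε κ g0)) z := by
    show NormedSpace.exp (-((τ - 0) • Lkappa M h ε κ g0)) z = _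
    rw [sub_zero]
  beta_reduce at e1 e2
  rw [e1, e2]

lemma exp_integral_scalar {c : ℝ} (hc : 0 < c) :
    ∫ θ in (0:ℝ)..τ, Real.exp (-((τ - θ) * c)) = (1 - Real.exp (-(τ * c))) / c := by
  have hder : ∀ θ : ℝ, HasDerivAt (fun θ : ℝ => Real.exp ((θ - τ) * c) / c)
      (Real.exp (-((τ - θ) * c))) θ := by
    intro θ
    have h1 : HasDerivAt (fun θ : ℝ => (θ - τ) * c) c θ := by
      simpa using ((hasDerivAt_id θ).sub_const τ).mul_const c
    have h2 := (h1.exp).div_const c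
    have he : Real.exp ((θ - τ) * c) * c / c = Real.exp (-((τ - θ) * c)) := by
      rw [mul_div_assoc, div_self (ne_of_gt hc), mul_one]
      congr 1
      ring
    rwa [he] at h2
  have hcont : Continuous fun θ : ℝ => Real.exp (-((τ - θ) * c)) := by continuity
  rw [intervalIntegral.integral_eq_sub_of_hasDerivAt (fun θ _ => hder θ)
    (hcont.intervalIntegrable 0 τ)]
  rw [sub_self, zero_mul, Real.exp_zero, zero_sub, neg_mul]
  ring

lemma Aop_norm_bound (hτ : 0 ≤ τ) (hκg : 0 < κ * g0) (z : GridFun M) :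
    ‖(∫ θ in (0:ℝ)..τ, NormedSpace.exp (-((τ - θ) • Lkappa M h ε κ g0))) z‖
      ≤ (1 - Real.exp (-(τ * (κ * g0)))) / (κ * g0) * ‖z‖ := by
  rw [Aop_apply]
  have hb : ∀ θ ∈ Set.Icc (0:ℝ) τ,
      ‖NormedSpace.exp (-((τ - θ) • Lkappa M h ε κ g0)) z‖
        ≤ Real.exp (-((τ - θ) * (κ * g0))) * ‖z‖ := by
    intro θ hθ
    have hs : 0 ≤ τ - θ := by linarith [hθ.2]
    exact norm_exp_neg_smul_Lk (M := M) (h := h) (ε := ε) (κ := κ) (g0 := g0) hs z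
  have hcg : Continuous fun θ : ℝ => Real.exp (-((τ - θ) * (κ * g0))) * ‖z‖ := by
    continuity
  calc ‖∫ θ in (0:ℝ)..τ, NormedSpace.exp (-((τ - θ) • Lkappa M h ε κ g0)) z‖
      ≤ ∫ θ in (0:ℝ)..τ, ‖NormedSpace.exp (-((τ - θ) • Lkappa M h ε κ g0)) z‖ :=
        intervalIntegral.norm_integral_le_integral_norm hτ
    _ ≤ ∫ θ in (0:ℝ)..τ, Real.exp (-((τ - θ) * (κ * g0))) * ‖z‖ := by
        apply intervalIntegral.integral_mono_on hτ
          (((cont_exp_path_apply (M := M) z).norm).intervalIntegrable 0 τ)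
          (hcg.intervalIntegrable 0 τ)
        intro θ hθ
        exact hb θ hθ
    _ = (1 - Real.exp (-(τ * (κ * g0)))) / (κ * g0) * ‖z‖ := by
        rw [intervalIntegral.integral_mul_const, exp_integral_scalar hκg]

end Integral

section Step
variable {h ε κ g0 τ : ℝ}

lemma abs_dot_le (v w : GridFun M) : |dot v w| ≤ (M : ℝ) ^ 2 * (‖v‖ * ‖w‖) := by
  have habs : ∀ q : Fin M × Fin M, |v q| ≤ ‖v‖ := by
    intro q; have := norm_le_pi_norm v q; rwa [Real.norm_eq_abs] at this
  have habsw : ∀ q : Fin M × Fin M, |w q| ≤ ‖w‖ := by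
    intro q; have := norm_le_pi_norm w q; rwa [Real.norm_eq_abs] at this
  calc |dot v w| ≤ ∑ p : Fin M × Fin M, |v p * w p| := Finset.abs_sum_le_sum_abs _ _
    _ ≤ ∑ _p : Fin M × Fin M, ‖v‖ * ‖w‖ := by
        apply Finset.sum_le_sum
        intro p _
        rw [abs_mul]
        exact mul_le_mul (habs p) (habsw p) (abs_nonneg _) (norm_nonneg _)
    _ = (M : ℝ) ^ 2 * (‖v‖ * ‖w‖) := by
        rw [Finset.sum_const, Finset.card_univ, Fintype.card_prod, Fintype.card_fin,
          nsmul_eq_mul]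
        push_cast
        ring

lemma abs_gridInner_le (v w : GridFun M) :
    |gridInner M h v w| ≤ h ^ 2 * ((M : ℝ) ^ 2 * (‖v‖ * ‖w‖)) := by
  rw [gridInner, abs_mul, abs_pow, sq_abs]
  exact mul_le_mul_of_nonneg_left (abs_dot_le v w) (sq_nonneg h)

lemma norm_dLap_le (hh : h ≠ 0) {b : ℝ} (v : GridFun M) (hv : ‖v‖ ≤ b) :
    ‖dLap M h v‖ ≤ 8 * b / h ^ 2 := by
  have hb : 0 ≤ b := le_trans (norm_nonneg v) hv
  have habs : ∀ q : Fin M × Fin M, |v q| ≤ b := by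
    intro q
    have := norm_le_pi_norm v q; rw [Real.norm_eq_abs] at this; linarith
  have h2 : (0:ℝ) < h ^ 2 := by positivity
  refine (pi_norm_le_iff_of_nonneg (by positivity)).2 fun p => ?_
  rw [Real.norm_eq_abs, dLap_apply, abs_div]
  rw [show |h ^ 2| = h ^ 2 from abs_of_pos h2]
  rw [div_le_div_iff_of_pos_right h2]
  have e1 := abs_le.1 (habs (p.1 + 1, p.2))
  have e2 := abs_le.1 (habs (p.1 - 1, p.2))
  have e3 := abs_le.1 (habs (p.1, p.2 + 1))
  have e4 := abs_le.1 (habs (p.1, p.2 - 1))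
  have e5 := abs_le.1 (habs p)
  rw [abs_le]
  constructor <;> [linarith [e1.1, e2.1, e3.1, e4.1, e5.2]; linarith [e1.2, e2.2, e3.2, e4.2, e5.1]]

lemma E1h_abs_le {F : ℝ → ℝ} {β CF : ℝ} (hCF : ∀ ξ ∈ Set.Icc (-β) β, |F ξ| ≤ CF)
    (v : GridFun M) (hv : ‖v‖ ≤ β) :
    |E1h M h F v| ≤ h ^ 2 * ((M : ℝ) ^ 2 * CF) := by
  have hmem : ∀ q : Fin M × Fin M, v q ∈ Set.Icc (-β) β := by
    intro q
    have := norm_le_pi_norm v q; rw [Real.norm_eq_abs] at this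
    have : |v q| ≤ β := le_trans this hv
    exact abs_le.1 this
  have hCF0 : 0 ≤ CF := le_trans (abs_nonneg _) (hCF (v (0,0)) (hmem (0,0)))
  rw [E1h, abs_mul, abs_pow, sq_abs]
  apply mul_le_mul_of_nonneg_left _ (sq_nonneg h)
  calc |∑ p : Fin M × Fin M, F (v p)| ≤ ∑ p : Fin M × Fin M, |F (v p)| :=
        Finset.abs_sum_le_sum_abs _ _
    _ ≤ ∑ _p : Fin M × Fin M, CF := Finset.sum_le_sum fun p _ => hCF _ (hmem p)
    _ = (M : ℝ) ^ 2 * CF := by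
        rw [Finset.sum_const, Finset.card_univ, Fintype.card_prod, Fintype.card_fin,
          nsmul_eq_mul]
        push_cast
        ring

end Step

section StepMain
variable {h ε κ τ : ℝ} {f F σ : ℝ → ℝ}

lemma EI1step_fst (us : GridFun M × ℝ) :
    (EI1step M h ε κ τ f F σ us).1
      = NormedSpace.exp (-(τ • Lkappa M h ε κ (gFun M h F σ us.1 us.2))) us.1
        + (∫ θ in (0:ℝ)..τ,
            NormedSpace.exp (-((τ - θ) • Lkappa M h ε κ (gFun M h F σ us.1 us.2))))
            (Nkappa M h κ (gFun M h F σ us.1 us.2) f F σ us.1 us.2) := rfl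

lemma EI1step_snd (us : GridFun M × ℝ) :
    (EI1step M h ε κ τ f F σ us).2
      = us.2 - gFun M h F σ us.1 us.2
          * gridInner M h (fun p => f (us.1 p)) ((EI1step M h ε κ τ f F σ us).1 - us.1) := rfl

lemma gridInner_eq_dot (v w : GridFun M) : gridInner M h v w = h ^ 2 * dot v w := rfl

lemma EI1step_delta (us : GridFun M × ℝ) :
    (EI1step M h ε κ τ f F σ us).1 - us.1
      = (∫ θ in (0:ℝ)..τ,
          NormedSpace.exp (-((τ - θ) • Lkappa M h ε κ (gFun M h F σ us.1 us.2))))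
          (fun p => gFun M h F σ us.1 us.2 * f (us.1 p) + ε ^ 2 * dLap M h us.1 p) := by
  set g0 := gFun M h F σ us.1 us.2 with hg0
  have hNL : Nkappa M h κ g0 f F σ us.1 us.2 - Lkappa M h ε κ g0 us.1
      = fun p => g0 * f (us.1 p) + ε ^ 2 * dLap M h us.1 p := by
    funext p
    have hN : Nkappa M h κ g0 f F σ us.1 us.2 p = g0 * f (us.1 p) + κ * g0 * us.1 p := by
      simp [Nkappa, hg0]
    have hL : Lkappa M h ε κ g0 us.1 p = κ * g0 * us.1 p - ε ^ 2 * dLap M h us.1 p := by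
      rw [Lk_apply]
      simp [Pi.sub_apply, Pi.smul_apply, smul_eq_mul]
    simp only [Pi.sub_apply, hN, hL]
    ring
  rw [EI1step_fst, ← hNL, map_sub]
  rw [Aop_Lk (z := us.1)]
  abel

lemma EI1step_energy (hh : h ≠ 0) (hτ : 0 ≤ τ) (us : GridFun M × ℝ)
    (hκg : 0 ≤ κ * gFun M h F σ us.1 us.2) :
    gradE M h ε (EI1step M h ε κ τ f F σ us).1 + (EI1step M h ε κ τ f F σ us).2
      ≤ gradE M h ε us.1 + us.2 := by
  set g0 := gFun M h F σ us.1 us.2 with hg0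
  set u0 := us.1 with hu0def
  set w : GridFun M := fun p => g0 * f (u0 p) + ε ^ 2 * dLap M h u0 p with hwdef
  set Aw := (∫ θ in (0:ℝ)..τ,
      NormedSpace.exp (-((τ - θ) • Lkappa M h ε κ g0))) w with hAw
  have hδ : (EI1step M h ε κ τ f F σ us).1 - u0 = Aw := EI1step_delta us
  have hu1 : (EI1step M h ε κ τ f F σ us).1 = u0 + Aw := by
    rw [← hδ]; abel
  have hE1 := gradE_eq (M := M) hh ε (EI1step M h ε κ τ f F σ us).1
  have hE0 := gradE_eq (M := M) hh ε u0
  have hs1 : (EI1step M h ε κ τ f F σ us).2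
      = us.2 - g0 * (h ^ 2 * dot (fun p => f (u0 p)) Aw) := by
    rw [EI1step_snd, hδ, gridInner_eq_dot]
  have hQ : dot (dLap M h (EI1step M h ε κ τ f F σ us).1) (EI1step M h ε κ τ f F σ us).1
      = dot (dLap M h u0) u0 + 2 * dot (dLap M h u0) Aw + dot (dLap M h Aw) Aw := by
    rw [hu1, map_add, dot_add_left, dot_add_right, dot_add_right]
    have hsym : dot (dLap M h Aw) u0 = dot (dLap M h u0) Aw := by
      rw [dLap_sym, dot_comm]
    rw [hsym]
    ring
  have hW : dot w Aw = g0 * dot (fun p => f (u0 p)) Aw + ε ^ 2 * dot (dLap M h u0) Aw := by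
    have hw2 : w = g0 • (fun p => f (u0 p)) + ε ^ 2 • (dLap M h u0 : GridFun M) := by
      funext p
      simp [hwdef, Pi.add_apply, Pi.smul_apply, smul_eq_mul]
    rw [hw2, dot_add_left, dot_smul_left, dot_smul_left]
  have hLk : dot (Lkappa M h ε κ g0 Aw) Aw
      = κ * g0 * dot Aw Aw - ε ^ 2 * dot (dLap M h Aw) Aw := by
    rw [Lk_apply, dot_sub_left, dot_smul_left, dot_smul_left]
  have hab : dot (Lkappa M h ε κ g0 Aw) Aw
      = dot Aw w - dot (NormedSpace.exp (-(τ • Lkappa M h ε κ g0)) Aw) w := by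
    have h1 : dot ((∫ θ in (0:ℝ)..τ,
        NormedSpace.exp (-((τ - θ) • Lkappa M h ε κ g0))) (Lkappa M h ε κ g0 Aw)) w
        = dot (Lkappa M h ε κ g0 Aw) Aw := Aop_sym _ w
    rw [Aop_Lk (z := Aw)] at h1
    rw [← h1, dot_sub_left]
  have hwAw : dot w Aw = dot Aw w := dot_comm _ _
  have hA1 : 0 ≤ dot Aw w := Aop_dot_nonneg hτ w
  have hexpsym : IsSym (NormedSpace.exp (-(τ • Lkappa M h ε κ g0))) := by
    rw [show -(τ • Lkappa M h ε κ g0) = (-τ) • Lkappa M h ε κ g0 from (neg_smul _ _).symm]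
    exact (Lk_sym.smul _).exp
  have hb' : 0 ≤ dot (NormedSpace.exp (-(τ • Lkappa M h ε κ g0)) Aw) w := by
    have e1 : dot (NormedSpace.exp (-(τ • Lkappa M h ε κ g0)) Aw) w
        = dot Aw (NormedSpace.exp (-(τ • Lkappa M h ε κ g0)) w) := hexpsym Aw w
    have e2 : dot ((∫ θ in (0:ℝ)..τ, NormedSpace.exp (-((τ - θ) • Lkappa M h ε κ g0)))
          (NormedSpace.exp (-(τ • Lkappa M h ε κ g0)) w)) w
        = dot (NormedSpace.exp (-(τ • Lkappa M h ε κ g0)) w) Aw :=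
      Aop_sym _ w
    rw [e1, dot_comm, ← e2]
    exact Aop_exp_dot_nonneg hτ w
  have hc : 0 ≤ dot Aw Aw := dot_self_nonneg Aw
  have key : gradE M h ε (EI1step M h ε κ τ f F σ us).1 + (EI1step M h ε κ τ f F σ us).2
      - (gradE M h ε u0 + us.2)
      = -(h ^ 2 * dot Aw w) / 2
        - (h ^ 2 * dot (NormedSpace.exp (-(τ • Lkappa M h ε κ g0)) Aw) w) / 2
        - κ * g0 * dot Aw Aw * h ^ 2 / 2 := by
    linear_combination hE1 - hE0 + hs1 + (-(ε ^ 2 / 2) * h ^ 2) * hQ + (h ^ 2) * hW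
      + (-(h ^ 2)) * hwAw + (-(h ^ 2) / 2) * hLk + (h ^ 2 / 2) * hab
  have p1 : 0 ≤ h ^ 2 * dot Aw w := mul_nonneg (sq_nonneg h) hA1
  have p2 : 0 ≤ h ^ 2 * dot (NormedSpace.exp (-(τ • Lkappa M h ε κ g0)) Aw) w :=
    mul_nonneg (sq_nonneg h) hb'
  have p3 : 0 ≤ κ * g0 * dot Aw Aw * h ^ 2 :=
    mul_nonneg (mul_nonneg hκg hc) (sq_nonneg h)
  linarith [key, p1, p2, p3]


lemma EI1step_maxbound (hτ : 0 ≤ τ) (hκ : 0 < κ) (us : GridFun M × ℝ)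
    (hg : 0 < gFun M h F σ us.1 us.2) {β : ℝ} (hβ : 0 ≤ β)
    (hfb : ∀ ξ ∈ Set.Icc (-β) β, |f ξ + κ * ξ| ≤ κ * β)
    (hu0 : ‖us.1‖ ≤ β) : ‖(EI1step M h ε κ τ f F σ us).1‖ ≤ β := by
  set g0 := gFun M h F σ us.1 us.2 with hg0
  have hκg : 0 < κ * g0 := mul_pos hκ hg
  have hmem : ∀ q : Fin M × Fin M, us.1 q ∈ Set.Icc (-β) β := by
    intro q
    have h1 := norm_le_pi_norm us.1 q
    rw [Real.norm_eq_abs] at h1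
    exact abs_le.1 (le_trans h1 hu0)
  have hN : ‖Nkappa M h κ g0 f F σ us.1 us.2‖ ≤ g0 * (κ * β) := by
    refine (pi_norm_le_iff_of_nonneg (by positivity)).2 fun p => ?_
    have hNp : Nkappa M h κ g0 f F σ us.1 us.2 p = g0 * (f (us.1 p) + κ * us.1 p) := by
      simp only [Nkappa, ← hg0]
      ring
    rw [Real.norm_eq_abs, hNp, abs_mul, abs_of_pos hg]
    exact mul_le_mul_of_nonneg_left (hfb _ (hmem p)) hg.le
  have h1 : ‖NormedSpace.exp (-(τ • Lkappa M h ε κ g0)) us.1‖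
      ≤ Real.exp (-(τ * (κ * g0))) * β := by
    refine le_trans (norm_exp_neg_smul_Lk hτ us.1) ?_
    exact mul_le_mul_of_nonneg_left hu0 (Real.exp_pos _).le
  have hE1 : Real.exp (-(τ * (κ * g0))) ≤ 1 := by
    rw [← Real.exp_zero]
    apply Real.exp_le_exp.2
    nlinarith
  have hcoef : 0 ≤ (1 - Real.exp (-(τ * (κ * g0)))) / (κ * g0) := by
    apply div_nonneg _ hκg.le
    linarith
  have h2 : ‖(∫ θ in (0:ℝ)..τ, NormedSpace.exp (-((τ - θ) • Lkappa M h ε κ g0)))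
        (Nkappa M h κ g0 f F σ us.1 us.2)‖
      ≤ (1 - Real.exp (-(τ * (κ * g0)))) / (κ * g0) * (g0 * (κ * β)) := by
    refine le_trans (Aop_norm_bound hτ hκg _) ?_
    exact mul_le_mul_of_nonneg_left hN hcoef
  have hsum : (1 - Real.exp (-(τ * (κ * g0)))) / (κ * g0) * (g0 * (κ * β))
      = (1 - Real.exp (-(τ * (κ * g0)))) * β := by
    field_simp
  rw [EI1step_fst, ← hg0]
  calc ‖NormedSpace.exp (-(τ • Lkappa M h ε κ g0)) us.1
        + (∫ θ in (0:ℝ)..τ, NormedSpace.exp (-((τ - θ) • Lkappa M h ε κ g0)))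
            (Nkappa M h κ g0 f F σ us.1 us.2)‖
      ≤ ‖NormedSpace.exp (-(τ • Lkappa M h ε κ g0)) us.1‖
        + ‖(∫ θ in (0:ℝ)..τ, NormedSpace.exp (-((τ - θ) • Lkappa M h ε κ g0)))
            (Nkappa M h κ g0 f F σ us.1 us.2)‖ := norm_add_le _ _
    _ ≤ Real.exp (-(τ * (κ * g0))) * β
        + (1 - Real.exp (-(τ * (κ * g0)))) / (κ * g0) * (g0 * (κ * β)) := add_le_add h1 h2
    _ = β := by rw [hsum]; ring

lemma EI1step_delta_norm (hh : h ≠ 0) (hτ : 0 ≤ τ) (hκ : 0 < κ) (us : GridFun M × ℝ)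
    (hg : 0 < gFun M h F σ us.1 us.2) {β Cf : ℝ} (hβ : 0 ≤ β)
    (hCf : ∀ ξ ∈ Set.Icc (-β) β, |f ξ| ≤ Cf)
    (hu0 : ‖us.1‖ ≤ β) :
    ‖(EI1step M h ε κ τ f F σ us).1 - us.1‖
      ≤ τ * (gFun M h F σ us.1 us.2 * Cf + ε ^ 2 * (8 * β / h ^ 2)) := by
  set g0 := gFun M h F σ us.1 us.2 with hg0
  have hκg : 0 < κ * g0 := mul_pos hκ hg
  have hmem : ∀ q : Fin M × Fin M, us.1 q ∈ Set.Icc (-β) β := by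
    intro q
    have h1 := norm_le_pi_norm us.1 q
    rw [Real.norm_eq_abs] at h1
    exact abs_le.1 (le_trans h1 hu0)
  have hCf0 : 0 ≤ Cf := le_trans (abs_nonneg _) (hCf _ (hmem (0,0)))
  have hΔ := norm_dLap_le (M := M) hh us.1 hu0
  have hw : ‖(fun p => g0 * f (us.1 p) + ε ^ 2 * dLap M h us.1 p : GridFun M)‖
      ≤ g0 * Cf + ε ^ 2 * (8 * β / h ^ 2) := by
    have hb8 : (0:ℝ) ≤ 8 * β / h ^ 2 := by positivity
    refine (pi_norm_le_iff_of_nonneg (by positivity)).2 fun p => ?_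
    rw [Real.norm_eq_abs]
    have hΔp : |dLap M h us.1 p| ≤ 8 * β / h ^ 2 := by
      have := norm_le_pi_norm (dLap M h us.1) p
      rw [Real.norm_eq_abs] at this
      linarith
    calc |g0 * f (us.1 p) + ε ^ 2 * dLap M h us.1 p|
        ≤ |g0 * f (us.1 p)| + |ε ^ 2 * dLap M h us.1 p| := abs_add_le _ _
      _ ≤ g0 * Cf + ε ^ 2 * (8 * β / h ^ 2) := by
          rw [abs_mul, abs_mul, abs_of_pos hg, abs_of_nonneg (sq_nonneg ε)]
          exact add_le_add (mul_le_mul_of_nonneg_left (hCf _ (hmem p)) hg.le)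
            (mul_le_mul_of_nonneg_left hΔp (sq_nonneg ε))
  have hcoefτ : (1 - Real.exp (-(τ * (κ * g0)))) / (κ * g0) ≤ τ := by
    rw [div_le_iff₀ hκg]
    have := Real.add_one_le_exp (-(τ * (κ * g0)))
    linarith
  have hE1 : Real.exp (-(τ * (κ * g0))) ≤ 1 := by
    rw [← Real.exp_zero]
    apply Real.exp_le_exp.2
    nlinarith
  have hcoef : 0 ≤ (1 - Real.exp (-(τ * (κ * g0)))) / (κ * g0) := by
    apply div_nonneg _ hκg.le
    linarith
  rw [EI1step_delta, ← hg0]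
  calc ‖(∫ θ in (0:ℝ)..τ, NormedSpace.exp (-((τ - θ) • Lkappa M h ε κ g0)))
        (fun p => g0 * f (us.1 p) + ε ^ 2 * dLap M h us.1 p)‖
      ≤ (1 - Real.exp (-(τ * (κ * g0)))) / (κ * g0)
        * ‖(fun p => g0 * f (us.1 p) + ε ^ 2 * dLap M h us.1 p : GridFun M)‖ :=
        Aop_norm_bound hτ hκg _
    _ ≤ τ * (g0 * Cf + ε ^ 2 * (8 * β / h ^ 2)) := by
        apply mul_le_mul hcoefτ hw (norm_nonneg _)
        linarith [hτ]

lemma EI1step_sdiff (us : GridFun M × ℝ) (hg : 0 < gFun M h F σ us.1 us.2) {Cf D : ℝ}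
    (hCf0 : 0 ≤ Cf)
    (hCf : ‖(fun p => f (us.1 p) : GridFun M)‖ ≤ Cf)
    (hδ : ‖(EI1step M h ε κ τ f F σ us).1 - us.1‖ ≤ D) :
    |(EI1step M h ε κ τ f F σ us).2 - us.2|
      ≤ gFun M h F σ us.1 us.2 * (h ^ 2 * ((M : ℝ) ^ 2 * (Cf * D))) := by
  set g0 := gFun M h F σ us.1 us.2 with hg0
  have hD0 : 0 ≤ D := le_trans (norm_nonneg _) hδ
  have hs : (EI1step M h ε κ τ f F σ us).2 - us.2
      = -(g0 * gridInner M h (fun p => f (us.1 p))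
          ((EI1step M h ε κ τ f F σ us).1 - us.1)) := by
    rw [EI1step_snd, ← hg0]
    ring
  rw [hs, abs_neg, abs_mul, abs_of_pos hg]
  apply mul_le_mul_of_nonneg_left _ hg.le
  refine le_trans (abs_gridInner_le _ _) ?_
  apply mul_le_mul_of_nonneg_left _ (sq_nonneg h)
  apply mul_le_mul_of_nonneg_left _ (sq_nonneg (M : ℝ))
  exact mul_le_mul hCf hδ (norm_nonneg _) hCf0

end StepMain

end Aux


/-- Uniform bounds on `g(uⁿ, sⁿ)` for GSAV-EI1: there exist `G_* > 0` and `G^* > 0`, independent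
of `τ`, such that `G_* ≤ g(uⁿ,sⁿ) ≤ G^*` for every `τ > 0` and `0 ≤ n ≤ ⌊T/τ⌋`. -/
theorem stmt_8 (M : ℕ) [NeZero M] (L h ε : ℝ) (hL : 0 < L) (hh : h = L / M) (hε : 0 < ε)
    (f F σ : ℝ → ℝ) (hF : ∀ x, HasDerivAt F (-f x) x)
    (hσ : ContDiff ℝ 1 σ) (hσpos : ∀ x, 0 < σ x) (hσmono : ∀ x, 0 ≤ deriv σ x)
    (κ : ℝ) (hκ : 0 < κ) (hf : ContDiff ℝ 1 f)
    (β : ℝ) (hβ : 0 < β) (hfβ : f β ≤ 0) (hfβ' : 0 ≤ f (-β))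
    (hκf : ∀ ξ ∈ Set.Icc (-β) β, |deriv f ξ| ≤ κ)
    (uinit : GridFun M) (hinit : ‖uinit‖ ≤ β) (T : ℝ) (hT : 0 < T) :
    ∃ Gl Gu : ℝ, 0 < Gl ∧ 0 < Gu ∧
      ∀ τ : ℝ, 0 < τ → ∀ n : ℕ, n ≤ Nat.floor (T / τ) →
        Gl ≤ gFun M h F σ (EI1 M h ε κ τ f F σ uinit n).1 (EI1 M h ε κ τ f F σ uinit n).2 ∧
        gFun M h F σ (EI1 M h ε κ τ f F σ uinit n).1 (EI1 M h ε κ τ f F σ uinit n).2 ≤ Gu := by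
  classical
  open Aux in
  -- positivity of the mesh
  have hM0 : (0:ℝ) < (M:ℝ) := by
    have := Nat.pos_of_ne_zero (NeZero.ne M)
    exact_mod_cast this
  have hhpos : 0 < h := by rw [hh]; positivity
  have hh0 : h ≠ 0 := ne_of_gt hhpos
  -- bounds for f and F on [-β, β]
  have hIcc : (Set.Icc (-β) β).Nonempty := ⟨-β, by constructor <;> linarith⟩
  obtain ⟨ξf, hξfmem, hξf⟩ := isCompact_Icc.exists_isMaxOn hIcc
    ((continuous_abs.comp hf.continuous).continuousOn)
  set Cf := |f ξf| with hCfdef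
  have hCf : ∀ ξ ∈ Set.Icc (-β) β, |f ξ| ≤ Cf := fun ξ hξ => hξf hξ
  have hCf0 : 0 ≤ Cf := abs_nonneg _
  have hFdiff : Differentiable ℝ F := fun x => (hF x).differentiableAt
  obtain ⟨ξF, hξFmem, hξF⟩ := isCompact_Icc.exists_isMaxOn hIcc
    ((continuous_abs.comp hFdiff.continuous).continuousOn)
  set CF := |F ξF| with hCFdef
  have hCF : ∀ ξ ∈ Set.Icc (-β) β, |F ξ| ≤ CF := fun ξ hξ => hξF hξ
  have hCF0 : 0 ≤ CF := abs_nonneg _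
  set K := h ^ 2 * ((M : ℝ) ^ 2 * CF) with hKdef
  have hK0 : 0 ≤ K := by positivity
  -- monotonicity of σ and its minimum on [-K,K]
  have hσd : Differentiable ℝ σ := hσ.differentiable one_ne_zero
  have hσm : Monotone σ := monotone_of_deriv_nonneg hσd hσmono
  have hKIcc : (Set.Icc (-K) K).Nonempty := ⟨0, by constructor <;> linarith⟩
  obtain ⟨x₀, hx₀mem, hx₀⟩ := isCompact_Icc.exists_isMinOn hKIcc (hσ.continuous.continuousOn)
  set σLo := σ x₀ with hσLodef
  have hσLo : ∀ y ∈ Set.Icc (-K) K, σLo ≤ σ y := fun y hy => hx₀ hy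
  have hσLo0 : 0 < σLo := hσpos x₀
  -- the |f ξ + κ ξ| ≤ κ β bound
  have hfb : ∀ ξ ∈ Set.Icc (-β) β, |f ξ + κ * ξ| ≤ κ * β := by
    have hder : ∀ x : ℝ, HasDerivAt (fun ξ => f ξ + κ * ξ) (deriv f x + κ) x := by
      intro x
      have h1 := (hf.differentiable one_ne_zero x).hasDerivAt
      have h2 : HasDerivAt (fun ξ : ℝ => κ * ξ) κ x := by
        simpa using (hasDerivAt_id x).const_mul κ
      exact h1.add h2
    have hmono : MonotoneOn (fun ξ => f ξ + κ * ξ) (Set.Icc (-β) β) := by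
      apply monotoneOn_of_deriv_nonneg (convex_Icc _ _)
      · exact (hf.continuous.add (continuous_const.mul continuous_id)).continuousOn
      · intro x _
        exact (hder x).differentiableAt.differentiableWithinAt
      · intro x hx
        rw [interior_Icc] at hx
        have hxm : x ∈ Set.Icc (-β) β := ⟨hx.1.le, hx.2.le⟩
        have := abs_le.1 (hκf x hxm)
        rw [(hder x).deriv]
        linarith [this.1]
    intro ξ hξ
    have hβm : β ∈ Set.Icc (-β) β := ⟨by linarith, le_refl β⟩
    have hβm' : (-β) ∈ Set.Icc (-β) β := ⟨le_refl _, by linarith⟩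
    have h1 : f ξ + κ * ξ ≤ f β + κ * β := hmono hξ hβm hξ.2
    have h2 : f (-β) + κ * (-β) ≤ f ξ + κ * ξ := hmono hβm' hξ hξ.1
    rw [abs_le]
    constructor <;> nlinarith
  -- constants
  set S0 := E1h M h F uinit with hS0def
  set Splus := gradE M h ε uinit + S0 with hSplusdef
  set Gu := σ Splus / σLo with hGudef
  have hGu0 : 0 < Gu := div_pos (hσpos _) hσLo0
  set W := Gu * Cf + ε ^ 2 * (8 * β / h ^ 2) with hWdef
  have hW0 : 0 ≤ W := by positivity
  set Cstep := Gu * (h ^ 2 * ((M : ℝ) ^ 2 * (Cf * W))) with hCdef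
  have hC0 : 0 ≤ Cstep := by positivity
  set Slo := S0 - T * Cstep with hSlodef
  set Gl := σ Slo / σ K with hGldef
  have hGl0 : 0 < Gl := div_pos (hσpos _) (hσpos _)
  refine ⟨Gl, Gu, hGl0, hGu0, ?_⟩
  intro τ hτ n hn
  -- the inductive invariant
  have main : ∀ m : ℕ,
      ‖(EI1 M h ε κ τ f F σ uinit m).1‖ ≤ β ∧
      gradE M h ε (EI1 M h ε κ τ f F σ uinit m).1 + (EI1 M h ε κ τ f F σ uinit m).2 ≤ Splus ∧
      S0 - (m : ℝ) * τ * Cstep ≤ (EI1 M h ε κ τ f F σ uinit m).2 := by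
    intro m
    induction m with
    | zero =>
        refine ⟨hinit, ?_, ?_⟩
        · simp [EI1, Splus, S0]
        · simp [EI1, S0]
    | succ m ih =>
        obtain ⟨hub, hen, hsl⟩ := ih
        set us := EI1 M h ε κ τ f F σ uinit m with husdef
        -- basic facts about g at step m
        have hgpos : 0 < gFun M h F σ us.1 us.2 := div_pos (hσpos _) (hσpos _)
        have hE1habs : |E1h M h F us.1| ≤ K := E1h_abs_le hCF us.1 hub
        have hE1hmem : E1h M h F us.1 ∈ Set.Icc (-K) K := abs_le.1 hE1habs
        have hsle : us.2 ≤ Splus := by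
          have := gradE_nonneg (M := M) (h := h) ε us.1
          linarith
        have hgle : gFun M h F σ us.1 us.2 ≤ Gu := by
          rw [gFun, hGudef]
          apply div_le_div₀ (hσpos Splus).le (hσm hsle) (hσpos _) (hσLo _ hE1hmem)
        -- the three step estimates
        have hnext1 : ‖(EI1step M h ε κ τ f F σ us).1‖ ≤ β :=
          EI1step_maxbound hτ.le hκ us hgpos hβ.le hfb hub
        have hnext2 : gradE M h ε (EI1step M h ε κ τ f F σ us).1
            + (EI1step M h ε κ τ f F σ us).2 ≤ Splus := by
          have := EI1step_energy (ε := ε) (f := f) hh0 hτ.le us (mul_pos hκ hgpos).le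
          linarith
        have hfnorm : ‖(fun p => f (us.1 p) : GridFun M)‖ ≤ Cf := by
          refine (pi_norm_le_iff_of_nonneg hCf0).2 fun p => ?_
          rw [Real.norm_eq_abs]
          apply hCf
          have h1 := norm_le_pi_norm us.1 p
          rw [Real.norm_eq_abs] at h1
          exact abs_le.1 (le_trans h1 hub)
        have hδ : ‖(EI1step M h ε κ τ f F σ us).1 - us.1‖ ≤ τ * W := by
          refine le_trans (EI1step_delta_norm hh0 hτ.le hκ us hgpos hβ.le hCf hub) ?_
          apply mul_le_mul_of_nonneg_left _ hτ.le
          rw [hWdef]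
          have : gFun M h F σ us.1 us.2 * Cf ≤ Gu * Cf :=
            mul_le_mul_of_nonneg_right hgle hCf0
          linarith
        have hsd := EI1step_sdiff (ε := ε) us hgpos hCf0 hfnorm hδ
        have hsd' : |(EI1step M h ε κ τ f F σ us).2 - us.2| ≤ τ * Cstep := by
          refine le_trans hsd ?_
          have e1 : gFun M h F σ us.1 us.2 * (h ^ 2 * ((M : ℝ) ^ 2 * (Cf * (τ * W))))
              = τ * (gFun M h F σ us.1 us.2 * (h ^ 2 * ((M : ℝ) ^ 2 * (Cf * W)))) := by
            ring
          have e2 : τ * (gFun M h F σ us.1 us.2 * (h ^ 2 * ((M : ℝ) ^ 2 * (Cf * W))))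
              ≤ τ * Cstep := by
            apply mul_le_mul_of_nonneg_left _ hτ.le
            rw [hCdef]
            apply mul_le_mul_of_nonneg_right hgle (by positivity)
          rw [e1]
          exact e2
        have hnext3 : S0 - ((m : ℕ) + 1 : ℝ) * τ * Cstep ≤ (EI1step M h ε κ τ f F σ us).2 := by
          have := (abs_le.1 hsd').1
          have hcast : ((m : ℕ) + 1 : ℝ) * τ * Cstep = (m : ℝ) * τ * Cstep + τ * Cstep := by
            ring
          rw [hcast]
          linarith
        have hrw : EI1 M h ε κ τ f F σ uinit (m + 1) = EI1step M h ε κ τ f F σ us := rfl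
        rw [hrw]
        refine ⟨hnext1, hnext2, ?_⟩
        have : ((m + 1 : ℕ) : ℝ) = (m : ℝ) + 1 := by push_cast; ring
        rw [this]
        exact hnext3
  obtain ⟨hub, hen, hsl⟩ := main n
  set us := EI1 M h ε κ τ f F σ uinit n with husdef
  -- the final bounds
  have hnτ : (n : ℝ) * τ ≤ T := by
    have h1 : (n : ℝ) ≤ (Nat.floor (T / τ) : ℝ) := by exact_mod_cast hn
    have h2 : (Nat.floor (T / τ) : ℝ) ≤ T / τ := Nat.floor_le (by positivity)
    calc (n : ℝ) * τ ≤ T / τ * τ := by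
          apply mul_le_mul_of_nonneg_right (le_trans h1 h2) hτ.le
      _ = T := by field_simp
  have hslo : Slo ≤ us.2 := by
    have : S0 - T * Cstep ≤ S0 - (n : ℝ) * τ * Cstep := by
      have := mul_le_mul_of_nonneg_right hnτ hC0
      linarith
    exact le_trans this hsl
  have hsle : us.2 ≤ Splus := by
    have := gradE_nonneg (M := M) (h := h) ε us.1
    linarith
  have hE1habs : |E1h M h F us.1| ≤ K := E1h_abs_le hCF us.1 hub
  have hE1hmem : E1h M h F us.1 ∈ Set.Icc (-K) K := abs_le.1 hE1habs
  constructor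
  · rw [hGldef, gFun]
    apply div_le_div₀ (hσpos _).le (hσm hslo) (hσpos _) (hσm hE1hmem.2)
  · rw [gFun, hGudef]
    apply div_le_div₀ (hσpos _).le (hσm hsle) (hσpos _) (hσLo _ hE1hmem)
end
end
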